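/- arXiv:2210.15049 — 9 statements merged into one kernel-verified Lean document; each statement's English description precedes it below -/
import Mathlib

section
/- Let Λ₁ and Λ₂ be well-rounded full-rank lattices in ℝ². Then Λ₁ is similar to Λ₂ if and only if there exist a minimal basis {x₁, y₁} of Λ₁ and a minimal basis {x₂, y₂} of Λ₂ such that |cos∠(x₁, y₁)| = |cos∠(x₂, y₂)|, where cos∠(x, y) = ⟨x, y⟩/(‖x‖·‖y‖). -/
open scoped RealInnerProductSpace

noncomputable section

/-- `ℝ²` with the Euclidean inner product and norm. -/
abbrev E2 : Type := EuclideanSpace ℝ (Fin 2)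

/-- The vector `(a, b) ∈ ℝ²`. -/
def v2 (a b : ℝ) : E2 := WithLp.toLp 2 ![a, b]

/-- The lattice `ℤx + ℤy`. -/
def latticeOf (x y : E2) : Set E2 := {z | ∃ m n : ℤ, z = m • x + n • y}

/-- `{x, y}` is a basis of the lattice `Λ`. -/
def IsBasisOf (x y : E2) (Λ : Set E2) : Prop :=
  LinearIndependent ℝ ![x, y] ∧ Λ = latticeOf x y

/-- `Λ` is a full-rank lattice of `ℝ²`. -/
def IsLattice (Λ : Set E2) : Prop := ∃ x y : E2, IsBasisOf x y Λ

/-- `Λ₁ ∼ Λ₂`: there are `α > 0` and an orthogonal transformation `U` with `Λ₂ = αUΛ₁`. -/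
def LatticeSimilar (Λ₁ Λ₂ : Set E2) : Prop :=
  ∃ α : ℝ, 0 < α ∧ ∃ U : (E2 ≃ₗᵢ[ℝ] E2), Λ₂ = (fun w => α • U w) '' Λ₁

/-- Cosine of the angle between `x` and `y`. -/
def cosAngle (x y : E2) : ℝ := ⟪x, y⟫ / (‖x‖ * ‖y‖)

/-- The twist map `T_α = diag(α, 1/α)`. -/
def Tmap (α : ℝ) : E2 → E2 := fun w => v2 (α * w 0) (w 1 / α)


/-- The length of a shortest nonzero vector of `Λ`. -/
def lambda1 (Λ : Set E2) : ℝ := sInf {r | ∃ z ∈ Λ, z ≠ 0 ∧ ‖z‖ = r}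

/-- The set `S(Λ)` of minimal vectors of `Λ`. -/
def minVecs (Λ : Set E2) : Set E2 := {z | z ∈ Λ ∧ ‖z‖ = lambda1 Λ}

/-- `Λ` is well-rounded: its minimal vectors span `ℝ²`. -/
def IsWellRounded (Λ : Set E2) : Prop := Submodule.span ℝ (minVecs Λ) = ⊤


/-- `{x, y}` is a minimal basis of the well-rounded lattice `Λ`. -/
def IsMinimalBasis (x y : E2) (Λ : Set E2) : Prop :=
  IsBasisOf x y Λ ∧ x ∈ minVecs Λ ∧ y ∈ minVecs Λ

-- AUX
open scoped Pointwise
lemma zsmul_eq_real (m : ℤ) (v : E2) : m • v = (m : ℝ) • v :=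
  (Int.cast_smul_eq_zsmul ℝ m v).symm

lemma latticeOf_int_comb {x y z w : E2} (hz : z ∈ latticeOf x y) (hw : w ∈ latticeOf x y)
    (m n : ℤ) : m • z + n • w ∈ latticeOf x y := by
  obtain ⟨a, b, rfl⟩ := hz; obtain ⟨c, d, rfl⟩ := hw
  refine ⟨m * a + n * c, m * b + n * d, ?_⟩
  simp only [zsmul_eq_real, Int.cast_add, Int.cast_mul, smul_add, smul_smul]
  module

lemma lambda1_le {Λ : Set E2} {z : E2} (hz : z ∈ Λ) (h0 : z ≠ 0) : lambda1 Λ ≤ ‖z‖ :=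
  csInf_le ⟨0, fun r ⟨w, _, _, hw⟩ => hw ▸ norm_nonneg w⟩ ⟨z, hz, h0, rfl⟩

lemma norm_sq_comb (s t : ℝ) (x y : E2) :
    ‖s • x + t • y‖ ^ 2 = s ^ 2 * ‖x‖ ^ 2 + 2 * s * t * ⟪x, y⟫ + t ^ 2 * ‖y‖ ^ 2 := by
  rw [norm_add_sq_real, norm_smul, norm_smul, real_inner_smul_left, real_inner_smul_right]
  simp [mul_pow, sq_abs]; ring

lemma lambda1_pos_of {x y : E2} {Λ : Set E2} (hind : LinearIndependent ℝ ![x, y])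
    (hx : x ∈ minVecs Λ) : 0 < lambda1 Λ := by
  have hx0 : x ≠ 0 := by
    have := hind.ne_zero 0; simpa using this
  rw [← hx.2]; exact norm_pos_iff.mpr hx0

set_option maxHeartbeats 1000000 in
lemma isMinimalBasis_of_minVecs {Λ : Set E2} (hL : IsLattice Λ) {x y : E2}
    (hx : x ∈ minVecs Λ) (hy : y ∈ minVecs Λ) (hind : LinearIndependent ℝ ![x, y]) :
    IsMinimalBasis x y Λ := by
  obtain ⟨u, v, _, hΛ⟩ := hL
  have hmem : ∀ {z w : E2}, z ∈ Λ → w ∈ Λ → ∀ m n : ℤ, m • z + n • w ∈ Λ := by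
    intro z w hz hw m n
    rw [hΛ] at hz hw ⊢
    exact latticeOf_int_comb hz hw m n
  set lam := lambda1 Λ with hlam
  have hlampos : 0 < lam := lambda1_pos_of hind hx
  have hfin : LinearIndependent ℝ ![x, y] := hind
  rw [linearIndependent_fin2] at hfin
  have hy0 : y ≠ 0 := by simpa using hfin.1
  have hax : ∀ a : ℝ, a • y ≠ x := by
    intro a; have := hfin.2 a; simpa using this
  -- inner product bound
  have hxp : x + y ∈ Λ := by
    have := hmem hx.1 hy.1 1 1; simpa using this
  have hxm : x - y ∈ Λ := by
    have := hmem hx.1 hy.1 1 (-1); simpa [sub_eq_add_neg] using this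
  have hxp0 : x + y ≠ 0 := by
    intro h
    exact hax (-1) (by rw [neg_smul, one_smul]; linear_combination (norm := module) -h)
  have hxm0 : x - y ≠ 0 := by
    intro h
    exact hax 1 (by rw [one_smul]; linear_combination (norm := module) -h)
  have hnx : ‖x‖ = lam := hx.2
  have hny : ‖y‖ = lam := hy.2
  have hip : |⟪x, y⟫| ≤ lam ^ 2 / 2 := by
    have e1 : lam ≤ ‖x + y‖ := lambda1_le hxp hxp0
    have e2 : lam ≤ ‖x - y‖ := lambda1_le hxm hxm0
    have e3 := norm_add_sq_real x y
    have e4 := norm_sub_sq_real x y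
    rw [hnx, hny] at e3 e4
    rw [abs_le]
    constructor <;> nlinarith [norm_nonneg (x + y), norm_nonneg (x - y)]
  refine ⟨⟨hind, ?_⟩, hx, hy⟩
  apply Set.eq_of_subset_of_subset
  · -- Λ ⊆ latticeOf x y
    intro z hz
    have hb2 : Fintype.card (Fin 2) = Module.finrank ℝ E2 := by
      simp [finrank_euclideanSpace_fin]
    set b := basisOfLinearIndependentOfCardEqFinrank hind hb2 with hbdef
    have hb : ⇑b = ![x, y] := coe_basisOfLinearIndependentOfCardEqFinrank hind hb2
    have hb0 : b 0 = x := by rw [hb]; rfl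
    have hb1 : b 1 = y := by rw [hb]; rfl
    set a := b.repr z 0 with ha
    set c := b.repr z 1 with hc
    have hzrep : z = a • x + c • y := by
      have := b.sum_repr z
      rw [Fin.sum_univ_two, hb0, hb1] at this
      exact this.symm
    set m := round a with hm
    set n := round c with hn
    set z' := z - ((m : ℝ) • x + (n : ℝ) • y) with hz'
    have hz'mem : z' ∈ Λ := by
      have h2 := hmem hz (hmem hx.1 hy.1 m n) 1 (-1)
      have he : z' = (1 : ℤ) • z + (-1 : ℤ) • ((m : ℤ) • x + (n : ℤ) • y) := by
        simp only [one_smul, neg_smul, zsmul_eq_real, hz']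
        abel
      rw [he]; exact h2
    have hz'eq : z' = (a - m) • x + (c - n) • y := by
      rw [hz', hzrep]; module
    have hz'0 : z' = 0 := by
      by_contra h0
      have hle : lam ≤ ‖z'‖ := lambda1_le hz'mem h0
      have hsq : ‖z'‖ ^ 2 = (a - m) ^ 2 * lam ^ 2 + 2 * (a - m) * (c - n) * ⟪x, y⟫
          + (c - n) ^ 2 * lam ^ 2 := by
        rw [hz'eq, norm_sq_comb, hnx, hny]
      have hs : |a - m| ≤ 1 / 2 := abs_sub_round a
      have ht : |c - n| ≤ 1 / 2 := abs_sub_round c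
      have hs2 : (a - m) ^ 2 ≤ 1 / 4 := by nlinarith [sq_abs (a - m), abs_nonneg (a - m)]
      have ht2 : (c - n) ^ 2 ≤ 1 / 4 := by nlinarith [sq_abs (c - n), abs_nonneg (c - n)]
      have hcross : (a - m) * (c - n) * ⟪x, y⟫ ≤ lam ^ 2 / 8 := by
        calc (a - m) * (c - n) * ⟪x, y⟫ ≤ |(a - m) * (c - n) * ⟪x, y⟫| := le_abs_self _
          _ = |a - m| * |c - n| * |⟪x, y⟫| := by rw [abs_mul, abs_mul]
          _ ≤ (1 / 2) * (1 / 2) * (lam ^ 2 / 2) :=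
              mul_le_mul (mul_le_mul hs ht (abs_nonneg _) (by norm_num)) hip (abs_nonneg _)
                (by norm_num)
          _ = lam ^ 2 / 8 := by ring
      nlinarith [norm_nonneg z']
    refine ⟨m, n, ?_⟩
    have : z = (m : ℝ) • x + (n : ℝ) • y := by
      have := sub_eq_zero.mp hz'0; rw [this]
    rw [this, zsmul_eq_real, zsmul_eq_real]
  · rintro z ⟨m, n, rfl⟩
    exact hmem hx.1 hy.1 m n

lemma exists_minimalBasis {Λ : Set E2} (hL : IsLattice Λ) (hW : IsWellRounded Λ) :
    ∃ x y, IsMinimalBasis x y Λ := by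
  have hfr : Module.finrank ℝ E2 = 2 := by simp [finrank_euclideanSpace_fin]
  have hx : ∃ x ∈ minVecs Λ, x ≠ 0 := by
    by_contra h; push_neg at h
    have hsub : minVecs Λ ⊆ ({0} : Set E2) := fun z hz => h z hz
    have hle : (⊤ : Submodule ℝ E2) ≤ ⊥ := by
      rw [← hW, ← Submodule.span_zero_singleton ℝ]
      exact Submodule.span_mono hsub
    have : (⊥ : Submodule ℝ E2) = ⊤ := (le_bot_iff.mp hle).symm
    exact bot_ne_top this
  obtain ⟨x, hx, hx0⟩ := hx
  have hy : ∃ y ∈ minVecs Λ, y ∉ Submodule.span ℝ ({x} : Set E2) := by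
    by_contra h; push_neg at h
    have hle : Submodule.span ℝ (minVecs Λ) ≤ Submodule.span ℝ ({x} : Set E2) :=
      Submodule.span_le.mpr h
    rw [hW] at hle
    have heq : Submodule.span ℝ ({x} : Set E2) = ⊤ := top_le_iff.mp hle
    have h1 := finrank_span_singleton (K := ℝ) hx0
    rw [heq, finrank_top, hfr] at h1
    norm_num at h1
  obtain ⟨y, hy, hyx⟩ := hy
  have hind : LinearIndependent ℝ ![x, y] := by
    rw [linearIndependent_fin2]
    have hy0 : y ≠ 0 := by
      intro h; exact hyx (by rw [h]; exact Submodule.zero_mem (Submodule.span ℝ ({x} : Set E2)))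
    refine ⟨by simpa using hy0, ?_⟩
    intro a ha
    simp only [Matrix.cons_val_one, Matrix.head_cons, Matrix.cons_val_zero] at ha
    rcases eq_or_ne a 0 with rfl | ha0
    · rw [zero_smul] at ha; exact hx0 ha.symm
    · apply hyx
      rw [Submodule.mem_span_singleton]
      exact ⟨a⁻¹, by rw [← ha, smul_smul, inv_mul_cancel₀ ha0, one_smul]⟩
  exact ⟨x, y, isMinimalBasis_of_minVecs hL hx hy hind⟩

lemma map_int_comb (α : ℝ) (U : E2 ≃ₗᵢ[ℝ] E2) (m n : ℤ) (a b : E2) :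
    α • U (m • a + n • b) = m • (α • U a) + n • (α • U b) := by
  rw [map_add, map_zsmul, map_zsmul, smul_add, smul_comm α (m : ℤ), smul_comm α (n : ℤ)]

lemma image_latticeOf (α : ℝ) (U : E2 ≃ₗᵢ[ℝ] E2) (x y : E2) :
    (fun w => α • U w) '' latticeOf x y = latticeOf (α • U x) (α • U y) := by
  ext z
  constructor
  · rintro ⟨w, ⟨m, n, rfl⟩, rfl⟩
    exact ⟨m, n, map_int_comb α U m n x y⟩
  · rintro ⟨m, n, rfl⟩
    exact ⟨m • x + n • y, ⟨m, n, rfl⟩, map_int_comb α U m n x y⟩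

lemma smul_map_ne_zero {α : ℝ} (hα : α ≠ 0) (U : E2 ≃ₗᵢ[ℝ] E2) {w : E2} (hw : w ≠ 0) :
    α • U w ≠ 0 := by
  intro h
  rcases smul_eq_zero.mp h with h' | h'
  · exact hα h'
  · exact hw (by simpa using congrArg U.symm h')

lemma lambda1_image {Λ₁ Λ₂ : Set E2} {α : ℝ} (hα : 0 < α) (U : E2 ≃ₗᵢ[ℝ] E2)
    (hU : Λ₂ = (fun w => α • U w) '' Λ₁) : lambda1 Λ₂ = α * lambda1 Λ₁ := by
  have hset : {r | ∃ z ∈ Λ₂, z ≠ 0 ∧ ‖z‖ = r} = α • {r | ∃ z ∈ Λ₁, z ≠ 0 ∧ ‖z‖ = r} := by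
    ext r
    rw [Set.mem_smul_set]
    constructor
    · rintro ⟨z, hz, hz0, rfl⟩
      rw [hU] at hz
      obtain ⟨w, hw, rfl⟩ := hz
      have hw0 : w ≠ 0 := by
        intro h; apply hz0; simp [h]
      exact ⟨‖w‖, ⟨w, hw, hw0, rfl⟩, by
        rw [smul_eq_mul, norm_smul, U.norm_map, Real.norm_eq_abs, abs_of_pos hα]⟩
    · rintro ⟨s, ⟨w, hw, hw0, rfl⟩, rfl⟩
      refine ⟨α • U w, ?_, smul_map_ne_zero hα.ne' U hw0, ?_⟩
      · rw [hU]; exact ⟨w, hw, rfl⟩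
      · rw [norm_smul, U.norm_map, Real.norm_eq_abs, abs_of_pos hα, smul_eq_mul]
  rw [lambda1, hset, Real.sInf_smul_of_nonneg hα.le, smul_eq_mul, lambda1]

lemma minVecs_image {Λ₁ Λ₂ : Set E2} {α : ℝ} (hα : 0 < α) (U : E2 ≃ₗᵢ[ℝ] E2)
    (hU : Λ₂ = (fun w => α • U w) '' Λ₁) {z : E2} (hz : z ∈ minVecs Λ₁) :
    α • U z ∈ minVecs Λ₂ := by
  refine ⟨by rw [hU]; exact ⟨z, hz.1, rfl⟩, ?_⟩
  rw [norm_smul, U.norm_map, Real.norm_eq_abs, abs_of_pos hα, hz.2, lambda1_image hα U hU]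

lemma indep_image {α : ℝ} (hα : α ≠ 0) (U : E2 ≃ₗᵢ[ℝ] E2) {x y : E2}
    (h : LinearIndependent ℝ ![x, y]) : LinearIndependent ℝ ![α • U x, α • U y] := by
  rw [linearIndependent_fin2] at h ⊢
  simp only [Matrix.cons_val_one, Matrix.head_cons, Matrix.cons_val_zero] at h ⊢
  constructor
  · intro hy
    exact (smul_map_ne_zero hα U h.1) hy
  · intro a ha
    apply h.2 a
    have h1 : α • U (a • y) = α • U x := by
      rw [map_smul, smul_comm]; exact ha
    have h2 : U (a • y) = U x := smul_right_injective E2 hα h1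
    exact U.injective h2

lemma cosAngle_image {α : ℝ} (hα : 0 < α) (U : E2 ≃ₗᵢ[ℝ] E2) (x y : E2) :
    cosAngle (α • U x) (α • U y) = cosAngle x y := by
  unfold cosAngle
  rw [real_inner_smul_left, real_inner_smul_right, LinearIsometryEquiv.inner_map_map,
    norm_smul, norm_smul, U.norm_map, U.norm_map, Real.norm_eq_abs, abs_of_pos hα,
    show α * ‖x‖ * (α * ‖y‖) = α ^ 2 * (‖x‖ * ‖y‖) by ring,
    show α * (α * ⟪x, y⟫) = α ^ 2 * ⟪x, y⟫ by ring,
    mul_div_mul_left _ _ (by positivity)]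

lemma isMinimalBasis_neg {x y : E2} {Λ : Set E2} (h : IsMinimalBasis x y Λ) :
    IsMinimalBasis x (-y) Λ := by
  obtain ⟨⟨hind, hlat⟩, hx, hy⟩ := h
  have hind' : LinearIndependent ℝ ![x, -y] := by
    rw [linearIndependent_fin2] at hind ⊢
    simp only [Matrix.cons_val_one, Matrix.head_cons, Matrix.cons_val_zero] at hind ⊢
    refine ⟨neg_ne_zero.mpr hind.1, fun a ha => hind.2 (-a) ?_⟩
    rw [neg_smul, ← smul_neg]; exact ha
  have hlat' : Λ = latticeOf x (-y) := by
    rw [hlat]; ext z; constructor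
    · rintro ⟨m, n, rfl⟩; exact ⟨m, -n, by simp⟩
    · rintro ⟨m, n, rfl⟩; exact ⟨m, -n, by simp⟩
  have hym : -y ∈ minVecs Λ := by
    refine ⟨?_, by rw [norm_neg]; exact hy.2⟩
    rw [hlat]; exact ⟨0, -1, by simp⟩
  exact ⟨⟨hind', hlat'⟩, hx, hym⟩

set_option maxHeartbeats 1000000 in
lemma similar_of_eq_inner {Λ₁ Λ₂ : Set E2} {x₁ y₁ x₂ y₂ : E2}
    (hb₁ : IsMinimalBasis x₁ y₁ Λ₁) (hb₂ : IsMinimalBasis x₂ y₂ Λ₂)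
    (h : ⟪x₁, y₁⟫ * (lambda1 Λ₂) ^ 2 = ⟪x₂, y₂⟫ * (lambda1 Λ₁) ^ 2) :
    LatticeSimilar Λ₁ Λ₂ := by
  obtain ⟨⟨hind₁, hlat₁⟩, hx₁, hy₁⟩ := hb₁
  obtain ⟨⟨hind₂, hlat₂⟩, hx₂, hy₂⟩ := hb₂
  set l₁ := lambda1 Λ₁ with hl₁def
  set l₂ := lambda1 Λ₂ with hl₂def
  have hl₁ : 0 < l₁ := lambda1_pos_of hind₁ hx₁
  have hl₂ : 0 < l₂ := lambda1_pos_of hind₂ hx₂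
  set c : ℝ := l₁ / l₂ with hcdef
  have hcpos : 0 < c := div_pos hl₁ hl₂
  have hb2 : Fintype.card (Fin 2) = Module.finrank ℝ E2 := by simp [finrank_euclideanSpace_fin]
  set b := basisOfLinearIndependentOfCardEqFinrank hind₁ hb2 with hbdef
  have hb : ⇑b = ![x₁, y₁] := coe_basisOfLinearIndependentOfCardEqFinrank hind₁ hb2
  have hb0 : b 0 = x₁ := by rw [hb]; rfl
  have hb1 : b 1 = y₁ := by rw [hb]; rfl
  set U₀ : E2 →ₗ[ℝ] E2 := b.constr ℝ ![c • x₂, c • y₂] with hU₀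
  have hU0x : U₀ x₁ = c • x₂ := by rw [← hb0]; exact b.constr_basis ℝ _ 0
  have hU0y : U₀ y₁ = c • y₂ := by rw [← hb1]; exact b.constr_basis ℝ _ 1
  have hxx₁ : ⟪x₁, x₁⟫ = l₁ ^ 2 := by rw [real_inner_self_eq_norm_sq, hx₁.2]
  have hyy₁ : ⟪y₁, y₁⟫ = l₁ ^ 2 := by rw [real_inner_self_eq_norm_sq, hy₁.2]
  have hxx₂ : ⟪x₂, x₂⟫ = l₂ ^ 2 := by rw [real_inner_self_eq_norm_sq, hx₂.2]
  have hyy₂ : ⟪y₂, y₂⟫ = l₂ ^ 2 := by rw [real_inner_self_eq_norm_sq, hy₂.2]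
  have hcc : c * (c * l₂ ^ 2) = l₁ ^ 2 := by
    rw [hcdef]; field_simp
  have hcx : c * (c * ⟪x₂, y₂⟫) = ⟪x₁, y₁⟫ := by
    rw [hcdef, show l₁ / l₂ * (l₁ / l₂ * ⟪x₂, y₂⟫) = ⟪x₂, y₂⟫ * l₁ ^ 2 / l₂ ^ 2 from by ring,
      div_eq_iff (by positivity)]
    linear_combination -h
  have hyx₂ : ⟪y₂, x₂⟫ = ⟪x₂, y₂⟫ := real_inner_comm _ _
  have hyx₁ : ⟪y₁, x₁⟫ = ⟪x₁, y₁⟫ := real_inner_comm _ _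
  have key : ∀ i j : Fin 2, ⟪U₀ (b i), U₀ (b j)⟫ = ⟪b i, b j⟫ := by
    intro i j
    fin_cases i <;> fin_cases j <;>
      simp only [Fin.zero_eta, Fin.mk_one, Fin.isValue, hb0, hb1, hU0x, hU0y,
        real_inner_smul_left, real_inner_smul_right, hyx₂, hyx₁, hxx₁, hyy₁, hxx₂, hyy₂] <;>
      first
        | linear_combination hcc
        | linear_combination hcx
  have hBil : ∀ u v : E2, ⟪U₀ u, U₀ v⟫ = ⟪u, v⟫ := by
    have hext : (innerₗ E2).compl₁₂ U₀ U₀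
        = (innerₗ E2) := by
      refine b.ext fun i => b.ext fun j => ?_
      simp only [LinearMap.compl₁₂_apply, innerₗ_apply_apply]
      exact key i j
    intro u v
    have h2 := DFunLike.congr_fun (DFunLike.congr_fun hext u) v
    simpa only [LinearMap.compl₁₂_apply, innerₗ_apply_apply] using h2
  have hfr : Module.finrank ℝ E2 = Module.finrank ℝ E2 := rfl
  refine ⟨l₂ / l₁, div_pos hl₂ hl₁, (U₀.isometryOfInner hBil).toLinearIsometryEquiv hfr, ?_⟩
  have hcoe : ⇑((U₀.isometryOfInner hBil).toLinearIsometryEquiv hfr) = ⇑U₀ := by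
    rw [LinearIsometry.coe_toLinearIsometryEquiv, LinearMap.coe_isometryOfInner]
  have hscale : l₂ / l₁ * c = 1 := by
    rw [hcdef]; field_simp
  have e1 : (l₂ / l₁) • ((U₀.isometryOfInner hBil).toLinearIsometryEquiv hfr) x₁ = x₂ := by
    rw [congrFun hcoe x₁, hU0x, smul_smul, hscale, one_smul]
  have e2 : (l₂ / l₁) • ((U₀.isometryOfInner hBil).toLinearIsometryEquiv hfr) y₁ = y₂ := by
    rw [congrFun hcoe y₁, hU0y, smul_smul, hscale, one_smul]
  rw [hlat₁, hlat₂, image_latticeOf, e1, e2]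


set_option maxHeartbeats 1000000 in
/-- Two well-rounded planar lattices are similar iff they admit minimal bases with the same
absolute cosine of the angle. -/
theorem stmt_2 (Λ₁ Λ₂ : Set E2) (h₁ : IsLattice Λ₁) (h₂ : IsLattice Λ₂)
    (w₁ : IsWellRounded Λ₁) (w₂ : IsWellRounded Λ₂) :
    LatticeSimilar Λ₁ Λ₂ ↔
      ∃ x₁ y₁ x₂ y₂ : E2, IsMinimalBasis x₁ y₁ Λ₁ ∧ IsMinimalBasis x₂ y₂ Λ₂ ∧
        |cosAngle x₁ y₁| = |cosAngle x₂ y₂| := by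
  constructor
  · rintro ⟨α, hα, U, hU⟩
    obtain ⟨x, y, ⟨⟨hind, hlat⟩, hx, hy⟩⟩ := exists_minimalBasis h₁ w₁
    refine ⟨x, y, α • U x, α • U y, ⟨⟨hind, hlat⟩, hx, hy⟩,
      ⟨⟨indep_image hα.ne' U hind, ?_⟩, minVecs_image hα U hU hx, minVecs_image hα U hU hy⟩, ?_⟩
    · rw [hU, hlat, image_latticeOf]
    · rw [cosAngle_image hα]
  · rintro ⟨x₁, y₁, x₂, y₂, hb₁, hb₂, hcos⟩
    have hl₁ : 0 < lambda1 Λ₁ := lambda1_pos_of hb₁.1.1 hb₁.2.1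
    have hl₂ : 0 < lambda1 Λ₂ := lambda1_pos_of hb₂.1.1 hb₂.2.1
    have hnx₁ : ‖x₁‖ = lambda1 Λ₁ := hb₁.2.1.2
    have hny₁ : ‖y₁‖ = lambda1 Λ₁ := hb₁.2.2.2
    have hnx₂ : ‖x₂‖ = lambda1 Λ₂ := hb₂.2.1.2
    have hny₂ : ‖y₂‖ = lambda1 Λ₂ := hb₂.2.2.2
    rw [abs_eq_abs] at hcos
    rcases hcos with hc | hc
    · apply similar_of_eq_inner hb₁ hb₂
      unfold cosAngle at hc
      rw [hnx₁, hny₁, hnx₂, hny₂,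
        div_eq_div_iff (by positivity) (by positivity)] at hc
      linear_combination hc
    · apply similar_of_eq_inner hb₁ (isMinimalBasis_neg hb₂)
      unfold cosAngle at hc
      rw [hnx₁, hny₁, hnx₂, hny₂, ← neg_div,
        div_eq_div_iff (by positivity) (by positivity)] at hc
      rw [inner_neg_right]
      linear_combination hc
end
end

section
/- Let x = (a, c) and y = (b, d) be vectors of ℝ² that are linearly independent over ℝ with ad + bc ≠ 0, and let α > 0 be a real number with ‖T_α x‖ = ‖T_α y‖. Then the cosine of the angle between T_α x and T_α y satisfies ⟨T_α x, T_α y⟩/(‖T_α x‖·‖T_α y‖) = (ac + bd)/(ad + bc). -/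
open scoped RealInnerProductSpace

noncomputable section

lemma inner_Tmap (α p q r s : ℝ) :
    ⟪Tmap α (v2 p q), Tmap α (v2 r s)⟫ = (α * p) * (α * r) + (q / α) * (s / α) := by
  simp [Tmap, v2, PiLp.inner_apply, Fin.sum_univ_two]
  ring


/-- For a twistable basis, the cosine of the angle of the twisted basis vectors is
`(ac + bd)/(ad + bc)`. -/
theorem stmt_4 (a c b d α : ℝ) (hli : LinearIndependent ℝ ![v2 a c, v2 b d])
    (habcd : a * d + b * c ≠ 0) (hα : 0 < α)
    (heq : ‖Tmap α (v2 a c)‖ = ‖Tmap α (v2 b d)‖) :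
    cosAngle (Tmap α (v2 a c)) (Tmap α (v2 b d)) = (a * c + b * d) / (a * d + b * c) := by
  have hα' : α ≠ 0 := ne_of_gt hα
  have hx : v2 a c ≠ 0 := by
    have := hli.ne_zero 0
    simpa using this
  have hac : a ≠ 0 ∨ c ≠ 0 := by
    by_contra h
    push_neg at h
    apply hx
    ext i; fin_cases i <;> simp [v2, h.1, h.2]
  have hN' : (α * a) * (α * a) + (c / α) * (c / α) ≠ 0 := by
    rcases hac with h | h
    · have h2 : α * a ≠ 0 := mul_ne_zero hα' h
      exact ne_of_gt (add_pos_of_pos_of_nonneg (mul_self_pos.mpr h2) (mul_self_nonneg _))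
    · have h2 : c / α ≠ 0 := div_ne_zero h hα'
      exact ne_of_gt (add_pos_of_nonneg_of_pos (mul_self_nonneg _) (mul_self_pos.mpr h2))
  have hnorm : ‖Tmap α (v2 a c)‖ * ‖Tmap α (v2 b d)‖ = ⟪Tmap α (v2 a c), Tmap α (v2 a c)⟫ := by
    rw [← heq, real_inner_self_eq_norm_mul_norm]
  have heq2 : ⟪Tmap α (v2 a c), Tmap α (v2 a c)⟫ = ⟪Tmap α (v2 b d), Tmap α (v2 b d)⟫ := by
    rw [real_inner_self_eq_norm_mul_norm, real_inner_self_eq_norm_mul_norm, heq]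
  rw [inner_Tmap, inner_Tmap] at heq2
  unfold cosAngle
  rw [hnorm, inner_Tmap, inner_Tmap]
  have key2 : α^4 * a^2 + c^2 = α^4 * b^2 + d^2 := by
    field_simp at heq2
    linear_combination heq2
  rw [div_eq_div_iff hN' habcd]
  field_simp
  linear_combination (-(a*c)) * key2
end
end

section
/- Let x = (a, c) and y = (b, d) be vectors of ℝ² that are linearly independent over ℝ with ad + bc ≠ 0. If |(ac + bd)/(ad + bc)| ≤ 1/2, then there exists a real number α > 0 such that ‖T_α x‖ = ‖T_α y‖ (i.e., the basis {x, y} is twistable). -/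
open scoped RealInnerProductSpace

noncomputable section

/-- `Λ₁ ∼ Λ₂`: there are `α > 0` and an orthogonal transformation `U` with `Λ₂ = αUΛ₁`. -/
def LatSimilar (Λ₁ Λ₂ : Set E2) : Prop :=
  ∃ α : ℝ, 0 < α ∧ ∃ U : (E2 ≃ₗᵢ[ℝ] E2), Λ₂ = (fun w => α • U w) '' Λ₁

/-- If `|(ac + bd)/(ad + bc)| ≤ 1/2` then the basis `{(a,c), (b,d)}` is twistable. -/
theorem stmt_5 (a c b d : ℝ) (hli : LinearIndependent ℝ ![v2 a c, v2 b d])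
    (habcd : a * d + b * c ≠ 0)
    (h : |(a * c + b * d) / (a * d + b * c)| ≤ 1 / 2) :
    ∃ α : ℝ, 0 < α ∧ ‖Tmap α (v2 a c)‖ = ‖Tmap α (v2 b d)‖ := by
  -- Key positivity: (a²−b²)(d²−c²) > 0.
  have habs : |a * c + b * d| ≤ |a * d + b * c| / 2 := by
    rw [abs_div] at h
    rw [div_le_div_iff₀ (abs_pos.2 habcd) (by norm_num)] at h
    linarith
  have hpos2 : (0:ℝ) < (a * d + b * c) ^ 2 := by positivity
  have hkey : 0 < (a ^ 2 - b ^ 2) * (d ^ 2 - c ^ 2) := by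
    have h1 : (a * c + b * d) ^ 2 ≤ (a * d + b * c) ^ 2 / 4 := by
      have h2 := mul_self_le_mul_self (abs_nonneg (a * c + b * d)) habs
      rw [abs_mul_abs_self] at h2
      nlinarith [sq_abs (a * d + b * c)]
    nlinarith
  have hab : a ^ 2 - b ^ 2 ≠ 0 := by
    intro hz; rw [hz] at hkey; simp at hkey
  set K : ℝ := (d ^ 2 - c ^ 2) / (a ^ 2 - b ^ 2) with hK
  have hKpos : 0 < K := by
    rcases lt_or_gt_of_ne hab with h1 | h1
    · have : d ^ 2 - c ^ 2 < 0 := by nlinarith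
      exact div_pos_of_neg_of_neg this h1
    · have : 0 < d ^ 2 - c ^ 2 := by nlinarith
      exact div_pos this h1
  refine ⟨Real.sqrt (Real.sqrt K), Real.sqrt_pos.2 (Real.sqrt_pos.2 hKpos), ?_⟩
  set α := Real.sqrt (Real.sqrt K) with hα
  have hαpos : 0 < α := Real.sqrt_pos.2 (Real.sqrt_pos.2 hKpos)
  have hα2 : α ^ 2 = Real.sqrt K := Real.sq_sqrt (Real.sqrt_nonneg K)
  have hα4 : α ^ 4 = K := by
    have : α ^ 4 = (α ^ 2) ^ 2 := by ring
    rw [this, hα2, Real.sq_sqrt hKpos.le]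
  have hT : ∀ p q : ℝ, ‖Tmap α (v2 p q)‖ = Real.sqrt ((α * p) ^ 2 + (q / α) ^ 2) := by
    intro p q
    rw [EuclideanSpace.norm_eq]
    congr 1
    simp [Tmap, v2, Fin.sum_univ_two, sq_abs]
  rw [hT, hT]
  congr 1
  have hαne : α ≠ 0 := hαpos.ne'
  have key : K * (a ^ 2 - b ^ 2) = d ^ 2 - c ^ 2 := by
    rw [hK, div_mul_cancel₀ _ hab]
  have : α ^ 4 * (a ^ 2 - b ^ 2) = d ^ 2 - c ^ 2 := by rw [hα4]; exact key
  field_simp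
  nlinarith [this]
end
end

section
/- Let u, v ∈ ℂ be linearly independent over ℝ with Im(uv) ≠ 0, and set x = (Re u, −Im u) and y = (Re v, −Im v) in ℝ². If α > 0 is a real number with ‖T_α x‖ = ‖T_α y‖, then the cosine of the angle between T_α x and T_α y satisfies ⟨T_α x, T_α y⟩/(‖T_α x‖·‖T_α y‖) = (Im(u²) + Im(v²))/(2·Im(uv)). -/
open scoped RealInnerProductSpace

noncomputable section

lemma inner_v2' (a b c d : ℝ) : ⟪v2 a b, v2 c d⟫ = a * c + b * d := by
  simp [v2, PiLp.inner_apply, Fin.sum_univ_two, RCLike.inner_apply, conj_trivial]; ring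

lemma Tmap_v2' (α a b : ℝ) : Tmap α (v2 a b) = v2 (α * a) (b / α) := by
  simp [Tmap, v2]


/-- For `u, v ∈ ℂ` embedded as `(Re w, -Im w)` and a twisting parameter `α`, the cosine of the
angle of the twisted basis equals `(Im u² + Im v²)/(2 Im(uv))`. -/
theorem stmt_7 (u v : ℂ) (hli : LinearIndependent ℝ ![u, v]) (him : (u * v).im ≠ 0)
    (α : ℝ) (hα : 0 < α)
    (heq : ‖Tmap α (v2 u.re (-u.im))‖ = ‖Tmap α (v2 v.re (-v.im))‖) :
    cosAngle (Tmap α (v2 u.re (-u.im))) (Tmap α (v2 v.re (-v.im))) =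
      ((u ^ 2).im + (v ^ 2).im) / (2 * (u * v).im) := by
  set a := u.re; set b := u.im; set c := v.re; set d := v.im
  have himuv : (u * v).im = a * d + b * c := by rw [Complex.mul_im]
  have hu2 : (u ^ 2).im = 2 * (a * b) := by rw [pow_two, Complex.mul_im]; ring
  have hv2 : (v ^ 2).im = 2 * (c * d) := by rw [pow_two, Complex.mul_im]; ring
  rw [Tmap_v2', Tmap_v2'] at heq ⊢
  have hu0 : ¬ (a = 0 ∧ b = 0) := by
    rintro ⟨h1, h2⟩
    exact him (by rw [himuv, h1, h2]; ring)
  have h1 : ‖v2 (α*a) (-b/α)‖ * ‖v2 (α*a) (-b/α)‖ = (α*a)^2 + (b/α)^2 := by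
    rw [← real_inner_self_eq_norm_mul_norm, inner_v2']; ring
  have h2 : ‖v2 (α*c) (-d/α)‖ * ‖v2 (α*c) (-d/α)‖ = (α*c)^2 + (d/α)^2 := by
    rw [← real_inner_self_eq_norm_mul_norm, inner_v2']; ring
  have hC : (α*a)^2 + (b/α)^2 = (α*c)^2 + (d/α)^2 := by rw [← h1, ← h2, heq]
  have hpos : (0:ℝ) < (α*a)^2 + (b/α)^2 := by
    rcases not_and_or.mp hu0 with h | h
    · positivity
    · positivity
  rw [cosAngle, inner_v2', ← heq, h1, hu2, hv2, himuv]
  have hα2 : α ≠ 0 := ne_of_gt hα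
  rw [div_eq_div_iff (ne_of_gt hpos) (by simpa using mul_ne_zero two_ne_zero him)]
  rw [himuv] at *
  field_simp at hC ⊢
  linear_combination (-a*b) * hC
end
end

section
/- Let u, v ∈ ℂ. If (Im(u²) + Im(v²))² ≤ (Im(uv))², then min{(Im(u²))², (Im(v²))²} ≤ (Im(u·conj(v)))². -/
/-- If `(Im(u²) + Im(v²))² ≤ Im(uv)²` then `min{Im(u²)², Im(v²)²} ≤ Im(u·conj v)²`. -/
theorem stmt_11 (u v : ℂ) (h : ((u ^ 2).im + (v ^ 2).im) ^ 2 ≤ ((u * v).im) ^ 2) :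
    min (((u ^ 2).im) ^ 2) (((v ^ 2).im) ^ 2) ≤ ((u * (starRingEnd ℂ) v).im) ^ 2 := by
  simp only [Complex.mul_im, Complex.conj_im, Complex.conj_re, pow_two, Complex.mul_re] at *
  rcases le_total (u.re * u.im + u.im * u.re) (-(v.re * v.im + v.im * v.re)) with hc | hc <;>
  rcases le_total ((u.re * u.im + u.im * u.re) * (u.re * u.im + u.im * u.re))
      ((v.re * v.im + v.im * v.re) * (v.re * v.im + v.im * v.re)) with h2 | h2
  · exact le_trans (min_le_left _ _) (by nlinarith [sq_nonneg (u.re*v.im - u.im*v.re), sq_nonneg (u.re*v.im + u.im*v.re)])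
  · exact le_trans (min_le_right _ _) (by nlinarith [sq_nonneg (u.re*v.im - u.im*v.re), sq_nonneg (u.re*v.im + u.im*v.re)])
  · exact le_trans (min_le_left _ _) (by nlinarith [sq_nonneg (u.re*v.im - u.im*v.re), sq_nonneg (u.re*v.im + u.im*v.re)])
  · exact le_trans (min_le_right _ _) (by nlinarith [sq_nonneg (u.re*v.im - u.im*v.re), sq_nonneg (u.re*v.im + u.im*v.re)])
end

section
/- Let D be a squarefree positive integer, K = ℚ(√−D) ⊂ ℂ (with √−D = i√D), 𝒪_K its ring of integers, and I a nonzero ideal of 𝒪_K. Then the set of elements x ∈ I for which there exists y ∈ I such that {x, y} is a good basis of I is finite. -/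
open scoped RealInnerProductSpace

noncomputable section

/-- `√-D = i·√D` as a complex number. -/
def sqrtnD (D : ℕ) : ℂ := Complex.I * Real.sqrt D

/-- `δ = (1+√-D)/2` if `-D ≡ 1 [ZMOD 4]` (i.e. `D % 4 = 3`), and `δ = √-D` otherwise. -/
def deltaK (D : ℕ) : ℂ := if D % 4 = 3 then (1 + sqrtnD D) / 2 else sqrtnD D

/-- The ring of integers `𝒪_K = ℤ[δ]` of `K = ℚ(√-D)`, as a subring of `ℂ`. -/
def OK (D : ℕ) : Subring ℂ := Subring.closure {deltaK D}

/-- The set of complex numbers belonging to the ideal `I ⊆ 𝒪_K`. -/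
def idealSet (D : ℕ) (I : Ideal (OK D)) : Set ℂ := (fun z : OK D => (z : ℂ)) '' I

/-- The embedding `ι : ℂ → ℝ², w ↦ (Re w, -Im w)`. -/
def iotaC (w : ℂ) : E2 := v2 w.re (-w.im)

/-- The planar lattice `Λ_K(I) = ι(I)` attached to the ideal `I`. -/
def LamK (D : ℕ) (I : Ideal (OK D)) : Set E2 := iotaC '' idealSet D I

/-- `{u, v}` is a `ℤ`-basis of the set `S ⊆ ℂ`, i.e. `S = ℤu + ℤv`. -/
def IsZBasisOf (S : Set ℂ) (u v : ℂ) : Prop := S = {z | ∃ m n : ℤ, z = m * u + n * v}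

/-- `F(u, v) = (1/4)[(Im(u²) + Im(v²))² - Im(uv)²]`. -/
def Fgood (u v : ℂ) : ℝ := (1 / 4) * (((u ^ 2).im + (v ^ 2).im) ^ 2 - ((u * v).im) ^ 2)


namespace Stmt14Aux


def w (u v : ℂ) : ℝ := u.re * v.im - u.im * v.re

lemma w_comb (x₀ y₀ : ℂ) (m n p q : ℤ) :
    w ((m : ℂ) * x₀ + (n : ℂ) * y₀) ((p : ℂ) * x₀ + (q : ℂ) * y₀)
      = ((m * q - n * p : ℤ) : ℝ) * w x₀ y₀ := by
  simp only [w, Complex.add_re, Complex.add_im, Complex.mul_re, Complex.mul_im,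
    Complex.intCast_re, Complex.intCast_im]
  push_cast
  ring

lemma sq_sqrtnD (D : ℕ) : sqrtnD D ^ 2 = -(D : ℂ) := by
  have h : ((Real.sqrt D : ℂ)) ^ 2 = (D : ℂ) := by
    rw [← Complex.ofReal_pow, Real.sq_sqrt (by positivity)]
    norm_cast
  simp [sqrtnD, mul_pow, Complex.I_sq, h]

lemma deltaK_sq (D : ℕ) : ∃ c e : ℤ, deltaK D ^ 2 = (c : ℂ) + (e : ℂ) * deltaK D := by
  by_cases h : D % 4 = 3
  · refine ⟨-((D : ℤ) / 4 + 1), 1, ?_⟩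
    have hm : (D : ℤ) % 4 = 3 := by omega
    have hD4 : (D : ℤ) = 4 * ((D : ℤ) / 4) + 3 := by omega
    have hD4c : (D : ℂ) = 4 * (((D : ℤ) / 4 : ℤ) : ℂ) + 3 := by exact_mod_cast hD4
    have hs := sq_sqrtnD D
    rw [deltaK, if_pos h]
    push_cast
    linear_combination (1/4 : ℂ) * hs - (1/4 : ℂ) * hD4c
  · exact ⟨-(D : ℤ), 0, by rw [deltaK, if_neg h]; push_cast; simp [sq_sqrtnD]⟩

lemma sqrtnD_re (D : ℕ) : (sqrtnD D).re = 0 := by simp [sqrtnD]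
lemma sqrtnD_im (D : ℕ) : (sqrtnD D).im = Real.sqrt D := by simp [sqrtnD]

lemma deltaK_re (D : ℕ) : (deltaK D).re = 0 ∨ (deltaK D).re = 1 / 2 := by
  by_cases h : D % 4 = 3
  · right; rw [deltaK, if_pos h]
    simp [Complex.div_re, Complex.add_re, sqrtnD_re, Complex.normSq]
  · left; rw [deltaK, if_neg h]; exact sqrtnD_re D

lemma deltaK_im (D : ℕ) : (deltaK D).im = Real.sqrt D ∨ (deltaK D).im = Real.sqrt D / 2 := by
  by_cases h : D % 4 = 3
  · right; rw [deltaK, if_pos h]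
    simp [Complex.div_im, Complex.add_im, sqrtnD_im, Complex.normSq]
  · left; rw [deltaK, if_neg h]; exact sqrtnD_im D

def Zdelta (D : ℕ) : Subring ℂ where
  carrier := {z | ∃ m n : ℤ, z = (m : ℂ) + (n : ℂ) * deltaK D}
  zero_mem' := ⟨0, 0, by simp⟩
  one_mem' := ⟨1, 0, by simp⟩
  add_mem' := by rintro a b ⟨m, n, rfl⟩ ⟨p, q, rfl⟩; exact ⟨m + p, n + q, by push_cast; ring⟩
  neg_mem' := by rintro a ⟨m, n, rfl⟩; exact ⟨-m, -n, by push_cast; ring⟩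
  mul_mem' := by
    rintro a b ⟨m, n, rfl⟩ ⟨p, q, rfl⟩
    obtain ⟨c, e, hce⟩ := deltaK_sq D
    exact ⟨m * p + n * q * c, m * q + n * p + n * q * e, by
      push_cast; linear_combination ((n : ℂ)) * q * hce⟩

lemma mem_Zdelta_iff (D : ℕ) (z : ℂ) :
    z ∈ Zdelta D ↔ ∃ m n : ℤ, z = (m : ℂ) + (n : ℂ) * deltaK D := Iff.rfl


lemma w_det_eq {S : Set ℂ} {x₀ y₀ x y : ℂ} (h₀ : IsZBasisOf S x₀ y₀) (h : IsZBasisOf S x y)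
    (hne : w x₀ y₀ ≠ 0) : |w x y| = |w x₀ y₀| := by
  have hxS : x ∈ S := by rw [h]; exact ⟨1, 0, by simp⟩
  have hyS : y ∈ S := by rw [h]; exact ⟨0, 1, by simp⟩
  have hx0S : x₀ ∈ S := by rw [h₀]; exact ⟨1, 0, by simp⟩
  have hy0S : y₀ ∈ S := by rw [h₀]; exact ⟨0, 1, by simp⟩
  rw [h₀] at hxS hyS
  rw [h] at hx0S hy0S
  obtain ⟨m, n, hx⟩ := hxS
  obtain ⟨p, q, hy⟩ := hyS
  obtain ⟨m', n', hx0⟩ := hx0S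
  obtain ⟨p', q', hy0⟩ := hy0S
  have e1 : w x y = ((m * q - n * p : ℤ) : ℝ) * w x₀ y₀ := by rw [hx, hy, w_comb]
  have e2 : w x₀ y₀ = ((m' * q' - n' * p' : ℤ) : ℝ) * w x y := by
    conv_lhs => rw [hx0, hy0]
    rw [w_comb]
  have e2' : w x₀ y₀ = ((m' * q' - n' * p' : ℤ) : ℝ) * (((m * q - n * p : ℤ) : ℝ) * w x₀ y₀) := by
    rw [← e1]; exact e2
  push_cast at e2'
  have e4 : (((m' * q' - n' * p') * (m * q - n * p) : ℤ) : ℝ) * w x₀ y₀ - w x₀ y₀ = 0 := by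
    push_cast
    linear_combination -e2'
  have e5 : (((m' * q' - n' * p') * (m * q - n * p) : ℤ) : ℝ) = 1 := by
    rcases mul_eq_zero.mp (show ((((m' * q' - n' * p') * (m * q - n * p) : ℤ) : ℝ) - 1) * w x₀ y₀ = 0 by
      linear_combination e4) with h5 | h5
    · linarith
    · exact absurd h5 hne
  have e6 : (m' * q' - n' * p') * (m * q - n * p) = 1 := by exact_mod_cast e5
  have e7 : (m * q - n * p) = 1 ∨ (m * q - n * p) = -1 :=
    Int.isUnit_iff.mp (IsUnit.of_mul_eq_one _ (by rw [Int.mul_comm]; exact e6))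
  rcases e7 with h7 | h7 <;> rw [e1, h7] <;> push_cast <;> simp [abs_mul]


lemma OK_le_Zdelta (D : ℕ) : OK D ≤ Zdelta D :=
  Subring.closure_le.mpr (by
    rintro x hx
    rw [Set.mem_singleton_iff] at hx
    exact ⟨0, 1, by simp [hx]⟩)

end Stmt14Aux

set_option maxHeartbeats 2000000 in
/-- Only finitely many elements of a nonzero ideal `I` of `𝒪_K` can be extended to a good
basis of `I`. -/
theorem stmt_14 (D : ℕ) (hD : Squarefree D) (hD0 : 0 < D)
    (I : Ideal (OK D)) (hI : I ≠ ⊥) :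
    {x : ℂ | x ∈ idealSet D I ∧
        ∃ y : ℂ, IsZBasisOf (idealSet D I) x y ∧ (x * y).im ≠ 0 ∧ Fgood x y ≤ 0}.Finite := by

  classical
  set T := {x : ℂ | x ∈ idealSet D I ∧
      ∃ y : ℂ, IsZBasisOf (idealSet D I) x y ∧ (x * y).im ≠ 0 ∧ Fgood x y ≤ 0} with hTdef
  show T.Finite
  rcases Set.eq_empty_or_nonempty T with he | hne
  · rw [he]; exact Set.finite_empty
  obtain ⟨x₀, hx₀S, y₀, hB₀, -, -⟩ := hne
  -- basic constants
  set s : ℝ := Real.sqrt D with hsdef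
  have hs0 : 0 < s := Real.sqrt_pos.mpr (by exact_mod_cast hD0)
  set δ : ℂ := deltaK D with hδdef
  have hι : δ.im = s ∨ δ.im = s / 2 := Stmt14Aux.deltaK_im D
  have hιlb : s / 2 ≤ δ.im := by rcases hι with h | h <;> rw [h] <;> linarith
  have hι0 : 0 < δ.im := lt_of_lt_of_le (by positivity) hιlb
  have hρ : δ.re = 0 ∨ δ.re = 1 / 2 := Stmt14Aux.deltaK_re D
  have hρabs : |δ.re| ≤ 1 / 2 := by rcases hρ with h | h <;> rw [h, abs_of_nonneg (by norm_num)] <;> norm_num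
  -- every element of the ideal is m + n δ
  have hmem : ∀ z ∈ idealSet D I, ∃ m n : ℤ, z = (m : ℂ) + (n : ℂ) * δ := by
    rintro z ⟨u, hu, rfl⟩
    exact (Stmt14Aux.mem_Zdelta_iff D u).mp (Stmt14Aux.OK_le_Zdelta D u.2)
  have hre : ∀ m n : ℤ, ((m : ℂ) + (n : ℂ) * δ).re = (m : ℝ) + (n : ℝ) * δ.re := by
    intro m n; simp [Complex.add_re, Complex.mul_re]
  have him2 : ∀ m n : ℤ, ((m : ℂ) + (n : ℂ) * δ).im = (n : ℝ) * δ.im := by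
    intro m n; simp [Complex.add_im, Complex.mul_im]
  -- half-integrality of real parts
  have hlb : ∀ m n : ℤ, (m : ℝ) + (n : ℝ) * δ.re ≠ 0 → 1 / 2 ≤ |(m : ℝ) + (n : ℝ) * δ.re| := by
    intro m n hne
    have htwo : ∃ k : ℤ, 2 * ((m : ℝ) + (n : ℝ) * δ.re) = (k : ℝ) := by
      rcases hρ with h | h
      · exact ⟨2 * m, by rw [h]; push_cast; ring⟩
      · exact ⟨2 * m + n, by rw [h]; push_cast; ring⟩
    obtain ⟨k, hk⟩ := htwo
    have hk0 : k ≠ 0 := by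
      rintro rfl
      rw [Int.cast_zero] at hk
      exact hne (by linarith)
    have h1 : (1 : ℝ) ≤ |(k : ℝ)| := by exact_mod_cast Int.one_le_abs hk0
    rw [← hk, abs_mul, abs_two] at h1
    linarith
  -- a nonzero element of the ideal and its δ-multiple
  obtain ⟨z, hzI, hz0⟩ := Submodule.exists_mem_ne_zero_of_ne_bot hI
  have hgS : (z : ℂ) ∈ idealSet D I := ⟨z, hzI, rfl⟩
  have hg0 : (z : ℂ) ≠ 0 := by
    intro h
    exact hz0 (by ext; exact h)
  have hδOK : deltaK D ∈ OK D := Subring.subset_closure rfl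
  have hgδS : δ * (z : ℂ) ∈ idealSet D I := ⟨⟨deltaK D, hδOK⟩ * z, I.mul_mem_left _ hzI, rfl⟩
  -- the determinant of the fixed basis is nonzero
  have hwg : Stmt14Aux.w (z : ℂ) (δ * (z : ℂ)) = δ.im * Complex.normSq (z : ℂ) := by
    simp only [Stmt14Aux.w, Complex.normSq_apply, Complex.mul_re, Complex.mul_im]
    ring
  have hwg0 : Stmt14Aux.w (z : ℂ) (δ * (z : ℂ)) ≠ 0 := by
    rw [hwg]
    exact mul_ne_zero (ne_of_gt hι0) (ne_of_gt (Complex.normSq_pos.mpr hg0))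
  have hΔ0ne : Stmt14Aux.w x₀ y₀ ≠ 0 := by
    intro h0
    apply hwg0
    have h1 := hgS; have h2 := hgδS
    rw [hB₀] at h1 h2
    obtain ⟨m₁, n₁, e1⟩ := h1
    obtain ⟨m₂, n₂, e2⟩ := h2
    rw [e2, e1, Stmt14Aux.w_comb, h0, mul_zero]
  set Δ : ℝ := |Stmt14Aux.w x₀ y₀| with hΔdef
  have hΔpos : 0 < Δ := abs_pos.mpr hΔ0ne
  -- the finite superset
  set N : ℤ := ⌈4 * Δ / s⌉ with hNdef
  apply Set.Finite.subset (Set.Finite.image (fun p : ℤ × ℤ => (p.1 : ℂ) + (p.2 : ℂ) * δ)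
    ((Set.finite_Icc (-N) N).prod (Set.finite_Icc (-N) N)))
  rintro x ⟨hxS, y, hB, -, hF⟩
  obtain ⟨mx, nx, hxd⟩ := hmem x hxS
  have hyS : y ∈ idealSet D I := by rw [hB]; exact ⟨0, 1, by simp⟩
  obtain ⟨my, ny, hyd⟩ := hmem y hyS
  have ha : x.re = (mx : ℝ) + (nx : ℝ) * δ.re := by rw [hxd]; exact hre mx nx
  have hb : x.im = (nx : ℝ) * δ.im := by rw [hxd]; exact him2 mx nx
  have hc : y.re = (my : ℝ) + (ny : ℝ) * δ.re := by rw [hyd]; exact hre my ny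
  have hd : y.im = (ny : ℝ) * δ.im := by rw [hyd]; exact him2 my ny
  -- determinant condition
  have hdet : |x.re * y.im - x.im * y.re| = Δ := Stmt14Aux.w_det_eq hB₀ hB hΔ0ne
  -- the F-condition in coordinates
  have hFr : (2 * (x.re * x.im) + 2 * (y.re * y.im)) ^ 2 ≤ (x.re * y.im + x.im * y.re) ^ 2 := by
    have h := hF
    simp only [Fgood, pow_two, Complex.mul_im] at h
    nlinarith [h]
  have habd : |x.re * x.im| ≤ Δ := by
    have h1 : (x.re * x.im) ^ 2 ≤ (x.re * y.im - x.im * y.re) ^ 2 := by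
      nlinarith [hFr, sq_nonneg (x.re * x.im + y.re * y.im), sq_nonneg (y.re * y.im),
        sq_nonneg (x.re * x.im)]
    have h2 : |x.re * x.im| ≤ |x.re * y.im - x.im * y.re| := sq_le_sq.mp h1
    rw [hdet] at h2; exact h2
  -- |Re x| * (s/2) ≤ Δ
  have haB : |x.re| * (s / 2) ≤ Δ := by
    by_cases hb0 : x.im = 0
    · have hd0 : y.im ≠ 0 := by
        intro hd0
        rw [hb0, hd0] at hdet
        simp at hdet
        linarith [hΔpos, hdet]
      have hny : ny ≠ 0 := by
        intro h; rw [h] at hd; simp at hd; exact hd0 hd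
      have h1 : (1 : ℝ) ≤ |(ny : ℝ)| := by exact_mod_cast Int.one_le_abs hny
      have hdlb : s / 2 ≤ |y.im| := by
        rw [hd, abs_mul, abs_of_pos hι0]
        nlinarith [hιlb, hι0]
      calc |x.re| * (s / 2) ≤ |x.re| * |y.im| :=
            mul_le_mul_of_nonneg_left hdlb (abs_nonneg _)
        _ = |x.re * y.im - x.im * y.re| := by rw [hb0]; rw [← abs_mul]; ring_nf
        _ = Δ := hdet
    · have hnx : nx ≠ 0 := by
        intro h; rw [h] at hb; simp at hb; exact hb0 hb
      have h1 : (1 : ℝ) ≤ |(nx : ℝ)| := by exact_mod_cast Int.one_le_abs hnx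
      have hblb : s / 2 ≤ |x.im| := by
        rw [hb, abs_mul, abs_of_pos hι0]
        nlinarith [hιlb, hι0]
      calc |x.re| * (s / 2) ≤ |x.re| * |x.im| :=
            mul_le_mul_of_nonneg_left hblb (abs_nonneg _)
        _ = |x.re * x.im| := (abs_mul _ _).symm
        _ ≤ Δ := habd
  -- |Im x| ≤ 2Δ
  have hbB : |x.im| ≤ 2 * Δ := by
    by_cases ha0 : x.re = 0
    · have hc0 : y.re ≠ 0 := by
        intro h
        rw [ha0, h] at hdet
        simp at hdet
        linarith [hΔpos, hdet]
      have hclb : (1 : ℝ) / 2 ≤ |y.re| := by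
        rw [hc]; exact hlb my ny (by rw [← hc]; exact hc0)
      have h2 : |x.im| * |y.re| = Δ := by
        rw [← abs_mul, ← hdet, ha0]
        rw [show (0 : ℝ) * y.im - x.im * y.re = -(x.im * y.re) by ring, abs_neg]
      nlinarith [abs_nonneg x.im]
    · have halb : (1 : ℝ) / 2 ≤ |x.re| := by
        rw [ha]; exact hlb mx nx (by rw [← ha]; exact ha0)
      have h2 : |x.re| * |x.im| ≤ Δ := by rw [← abs_mul]; exact habd
      nlinarith [abs_nonneg x.im]
  -- coordinate bounds
  have hnxB : |(nx : ℝ)| ≤ 4 * Δ / s := by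
    have h1 : |(nx : ℝ)| * (s / 2) ≤ |(nx : ℝ)| * δ.im :=
      mul_le_mul_of_nonneg_left hιlb (abs_nonneg _)
    have h2 : |(nx : ℝ)| * δ.im = |x.im| := by rw [hb, abs_mul, abs_of_pos hι0]
    rw [le_div_iff₀ hs0]
    nlinarith [hbB]
  have haabs : |x.re| ≤ 2 * Δ / s := by
    rw [le_div_iff₀ hs0]
    nlinarith [haB]
  have hmxB : |(mx : ℝ)| ≤ 4 * Δ / s := by
    have e : (mx : ℝ) = x.re - (nx : ℝ) * δ.re := by rw [ha]; ring
    have h1 : |(mx : ℝ)| ≤ |x.re| + |(nx : ℝ)| * |δ.re| := by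
      rw [e, ← abs_mul]
      exact abs_sub _ _
    have h3 : |(nx : ℝ)| * |δ.re| ≤ (4 * Δ / s) * (1 / 2) := by
      apply mul_le_mul hnxB hρabs (abs_nonneg _)
      positivity
    have h4 : 2 * Δ / s + 4 * Δ / s * (1 / 2) = 4 * Δ / s := by ring
    linarith [haabs]
  -- conclude membership
  refine ⟨(mx, nx), ⟨Set.mem_Icc.mpr ⟨?_, ?_⟩, Set.mem_Icc.mpr ⟨?_, ?_⟩⟩, hxd.symm⟩
  · have h1 : -(N : ℝ) ≤ (mx : ℝ) := by
      have := (abs_le.mp hmxB).1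
      have h2 : (4 : ℝ) * Δ / s ≤ (N : ℝ) := Int.le_ceil _
      linarith
    exact_mod_cast h1
  · have h1 : (mx : ℝ) ≤ (N : ℝ) := by
      have := (abs_le.mp hmxB).2
      have h2 : (4 : ℝ) * Δ / s ≤ (N : ℝ) := Int.le_ceil _
      linarith
    exact_mod_cast h1
  · have h1 : -(N : ℝ) ≤ (nx : ℝ) := by
      have := (abs_le.mp hnxB).1
      have h2 : (4 : ℝ) * Δ / s ≤ (N : ℝ) := Int.le_ceil _
      linarith
    exact_mod_cast h1
  · have h1 : (nx : ℝ) ≤ (N : ℝ) := by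
      have := (abs_le.mp hnxB).2
      have h2 : (4 : ℝ) * Δ / s ≤ (N : ℝ) := Int.le_ceil _
      linarith
    exact_mod_cast h1
end
end

section
/- Let D be a squarefree positive integer, K = ℚ(√−D) ⊂ ℂ (with √−D = i√D), 𝒪_K its ring of integers, I a nonzero ideal of 𝒪_K, and x ∈ I with (Im(x²))² ≤ vol²(Λ_K(I)). Then there exist two full-rank lattices L₁, L₂ ⊆ ℝ² such that for every y ∈ I for which {x, y} is a good basis of I and for every α > 0 with ‖T_α ι(x)‖ = ‖T_α ι(y)‖, the twist lattice T_αΛ_K(I) is similar to L₁ or to L₂ (i.e., x can be extended to at most two good bases of I, up to similarity of the resulting well-rounded twists). -/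
open scoped RealInnerProductSpace

noncomputable section

/-- `Λ₁ ∼ Λ₂`: there are `α > 0` and an orthogonal transformation `U` with `Λ₂ = αUΛ₁`. -/
def SimilarLat (Λ₁ Λ₂ : Set E2) : Prop :=
  ∃ α : ℝ, 0 < α ∧ ∃ U : (E2 ≃ₗᵢ[ℝ] E2), Λ₂ = (fun w => α • U w) '' Λ₁

-- ==================== basic E2 lemmas ====================

lemma v2_app0 (p q : ℝ) : (v2 p q) 0 = p := rfl
lemma v2_app1 (p q : ℝ) : (v2 p q) 1 = q := rfl

lemma norm_v2 (p q : ℝ) : ‖(v2 p q)‖^2 = p^2 + q^2 := by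
  have h := EuclideanSpace.norm_eq (𝕜 := ℝ) (v2 p q)
  rw [h, Real.sq_sqrt (by positivity), Fin.sum_univ_two]
  simp [v2]

lemma Tmap_iotaC (α : ℝ) (w : ℂ) : Tmap α (iotaC w) = v2 (α * w.re) (-w.im / α) := rfl

lemma hE_of_norm (α : ℝ) (hα : 0 < α) (x y : ℂ)
    (h : ‖Tmap α (iotaC x)‖ = ‖Tmap α (iotaC y)‖) :
    (α^2)^2 * x.re^2 + x.im^2 = (α^2)^2 * y.re^2 + y.im^2 := by
  have h2 : ‖Tmap α (iotaC x)‖^2 = ‖Tmap α (iotaC y)‖^2 := by rw [h]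
  rw [Tmap_iotaC, Tmap_iotaC, norm_v2, norm_v2] at h2
  have hα0 : α ≠ 0 := ne_of_gt hα
  field_simp at h2
  nlinarith [h2]

-- ==================== component dictionary ====================

lemma im_sq (x : ℂ) : (x^2).im = 2*(x.re*x.im) := by
  rw [sq, Complex.mul_im]; ring

lemma im_mul (x y : ℂ) : (x*y).im = x.re*y.im + x.im*y.re := Complex.mul_im x y

lemma im_mul_conj (x y : ℂ) : (x * (starRingEnd ℂ) y).im = x.im*y.re - x.re*y.im := by
  rw [Complex.mul_im, Complex.conj_re, Complex.conj_im]; ring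

-- ==================== rank lemma ====================

lemma im_conj_pair (u v : ℂ) (h : (u * (starRingEnd ℂ) v).im = 0) (m n m' n' : ℤ) :
    ((((m:ℂ))*u + ((n:ℂ))*v) * (starRingEnd ℂ) (((m':ℂ))*u + ((n':ℂ))*v)).im = 0 := by
  have hvu : (v * (starRingEnd ℂ) u).im = 0 := by
    have : v * (starRingEnd ℂ) u = (starRingEnd ℂ) (u * (starRingEnd ℂ) v) := by
      rw [map_mul, Complex.conj_conj, mul_comm]
    rw [this, Complex.conj_im, h, neg_zero]
  have huu : (u * (starRingEnd ℂ) u).im = 0 := by rw [Complex.mul_conj]; simp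
  have hvv : (v * (starRingEnd ℂ) v).im = 0 := by rw [Complex.mul_conj]; simp
  have expand : (((m:ℂ))*u + ((n:ℂ))*v) * (starRingEnd ℂ) (((m':ℂ))*u + ((n':ℂ))*v)
      = ((m*m' : ℤ):ℂ) * (u * (starRingEnd ℂ) u) + ((m*n' : ℤ):ℂ) * (u * (starRingEnd ℂ) v)
        + ((n*m' : ℤ):ℂ) * (v * (starRingEnd ℂ) u) + ((n*n' : ℤ):ℂ) * (v * (starRingEnd ℂ) v) := by
    rw [map_add, map_mul, map_mul, map_intCast, map_intCast]
    push_cast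
    ring
  rw [expand]
  simp [Complex.add_im, Complex.mul_im, Complex.intCast_re, Complex.intCast_im, h, hvu, huu, hvv]

lemma deltaK_im_pos (D : ℕ) (hD0 : 0 < D) : 0 < (deltaK D).im := by
  have h : (0:ℝ) < Real.sqrt D := Real.sqrt_pos.mpr (by exact_mod_cast hD0)
  unfold deltaK sqrtnD
  split_ifs
  · simp [Complex.div_im, Complex.add_im, Complex.mul_im]
    positivity
  · simp [Complex.mul_im]
    exact_mod_cast hD0

lemma Vne (D : ℕ) (hD0 : 0 < D) (I : Ideal (OK D)) (hI : I ≠ ⊥) (u v : ℂ)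
    (hb : IsZBasisOf (idealSet D I) u v) : (u * (starRingEnd ℂ) v).im ≠ 0 := by
  intro h0
  obtain ⟨z₀, hz₀I, hz₀⟩ := (Submodule.ne_bot_iff I).mp hI
  have hδmem : deltaK D ∈ OK D := Subring.subset_closure rfl
  set δel : OK D := ⟨deltaK D, hδmem⟩ with hδel
  have hz1I : z₀ * δel ∈ I := Ideal.mul_mem_right δel I hz₀I
  have hz0S : (z₀ : ℂ) ∈ idealSet D I := ⟨z₀, hz₀I, rfl⟩
  have hz1S : ((z₀ : ℂ) * deltaK D) ∈ idealSet D I := ⟨z₀ * δel, hz1I, rfl⟩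
  rw [hb] at hz0S hz1S
  obtain ⟨m₁, n₁, e₁⟩ := hz0S
  obtain ⟨m₂, n₂, e₂⟩ := hz1S
  have key : (((z₀:ℂ)) * (starRingEnd ℂ) ((z₀:ℂ) * deltaK D)).im = 0 := by
    rw [e₂, e₁]
    exact im_conj_pair u v h0 m₁ n₁ m₂ n₂
  have hz0c : (z₀ : ℂ) ≠ 0 := fun h => hz₀ (by exact_mod_cast (ZeroMemClass.coe_eq_zero).mp h)
  have hns : 0 < Complex.normSq (z₀:ℂ) := Complex.normSq_pos.mpr hz0c
  rw [map_mul, ← mul_assoc, Complex.mul_conj] at key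
  simp only [Complex.mul_im, Complex.conj_im, Complex.conj_re, Complex.ofReal_re, Complex.ofReal_im] at key
  have hδim : 0 < (deltaK D).im := deltaK_im_pos D hD0
  nlinarith [mul_pos hns hδim, key]


private lemma sq_cancel (β β' : ℝ) (hβ : 0 < β) (hβ' : 0 < β') (h : β^2 = β'^2) : β = β' := by
  have h5 : (β - β') * (β + β') = 0 := by linear_combination h
  rcases mul_eq_zero.mp h5 with h6 | h6
  · linarith
  · linarith

lemma uniq_beta (a b C D β β' : ℝ) (hβ : 0 < β) (hβ' : 0 < β')
    (h1 : β^2*a^2 + b^2 = β^2*C^2 + D^2)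
    (h2 : β'^2*a^2 + b^2 = β'^2*C^2 + D^2)
    (hnd : ¬(a^2 = C^2 ∧ b^2 = D^2)) : β = β' := by
  by_cases hac : a^2 = C^2
  · exact absurd ⟨hac, by nlinarith⟩ hnd
  · have h6 : (β^2 - β'^2) * (a^2 - C^2) = 0 := by linear_combination h1 - h2
    rcases mul_eq_zero.mp h6 with h7 | h7
    · exact sq_cancel β β' hβ hβ' (by linarith)
    · exact absurd (by linarith : a^2 = C^2) hac

lemma core_zero (a b c d β β' : ℝ) (k : ℤ) (hβ : 0 < β) (hβ' : 0 < β') (hk : k ≠ 0)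
    (hQ : a*b = 0)
    (hV0 : b*c - a*d ≠ 0)
    (hF : (2*(a*b) + 2*(c*d))^2 ≤ (a*d + b*c)^2)
    (hF' : (2*(a*b) + 2*((c+(k:ℝ)*a)*(d+(k:ℝ)*b)))^2 ≤ (a*(d+(k:ℝ)*b) + b*(c+(k:ℝ)*a))^2)
    (hE : β^2*a^2 + b^2 = β^2*c^2 + d^2)
    (hE' : β'^2*a^2 + b^2 = β'^2*(c+(k:ℝ)*a)^2 + (d+(k:ℝ)*b)^2) : β = β' := by
  have hk1 : (1:ℝ) ≤ (k:ℝ)^2 := by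
    have : 1 ≤ k^2 := by rcases hk.lt_or_gt with h|h <;> nlinarith
    exact_mod_cast this
  rcases mul_eq_zero.mp hQ with ha | hb
  · -- a = 0, b ≠ 0, c ≠ 0
    subst ha
    have hb0 : b ≠ 0 := fun h => hV0 (by rw [h]; ring)
    have hc0 : c ≠ 0 := fun h => hV0 (by rw [h]; ring)
    have hc2 : 0 < c^2 := by positivity
    have hd1 : 4*d^2 ≤ b^2 := by nlinarith [hF, hc2]
    have hd2 : 4*(d+(k:ℝ)*b)^2 ≤ b^2 := by nlinarith [hF', hc2]
    have hb2 : b^2 ≤ ((k:ℝ)*b)^2 := by nlinarith [sq_nonneg b]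
    have hex1 : 4*(d+(k:ℝ)*b)^2 = 4*d^2 + 8*d*((k:ℝ)*b) + 4*((k:ℝ)*b)^2 := by ring
    have hex2 : (2*d + (k:ℝ)*b)^2 = 4*d^2 + 4*d*((k:ℝ)*b) + ((k:ℝ)*b)^2 := by ring
    have hzero : (2*d + (k:ℝ)*b)^2 ≤ 0 := by rw [hex2]; linarith [hd1, hd2, hb2, hex1]
    have hkb : (k:ℝ)*b = -2*d := by
      have h0 : 2*d + (k:ℝ)*b = 0 := by
        have := le_antisymm hzero (sq_nonneg _)
        exact sq_eq_zero_iff.mp this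
      linarith
    have hdd : (d+(k:ℝ)*b)^2 = d^2 := by rw [hkb]; ring
    have hE'' : β'^2*(0:ℝ)^2 + b^2 = β'^2*c^2 + d^2 := by
      rw [hdd] at hE'; linear_combination hE'
    exact uniq_beta 0 b c d β β' hβ hβ' (by linear_combination hE) hE''
      (fun ⟨u1, _⟩ => hc0 (sq_eq_zero_iff.mp (by linarith [u1])))
  · -- b = 0, a ≠ 0, d ≠ 0
    subst hb
    have ha0 : a ≠ 0 := fun h => hV0 (by rw [h]; ring)
    have hd0 : d ≠ 0 := fun h => hV0 (by rw [h]; ring)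
    have hd2 : 0 < d^2 := by positivity
    have hc1 : 4*c^2 ≤ a^2 := by nlinarith [hF, hd2]
    have hc2 : 4*(c+(k:ℝ)*a)^2 ≤ a^2 := by nlinarith [hF', hd2]
    have ha2 : a^2 ≤ ((k:ℝ)*a)^2 := by nlinarith [sq_nonneg a]
    have hex1 : 4*(c+(k:ℝ)*a)^2 = 4*c^2 + 8*c*((k:ℝ)*a) + 4*((k:ℝ)*a)^2 := by ring
    have hex2 : (2*c + (k:ℝ)*a)^2 = 4*c^2 + 4*c*((k:ℝ)*a) + ((k:ℝ)*a)^2 := by ring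
    have hzero : (2*c + (k:ℝ)*a)^2 ≤ 0 := by rw [hex2]; linarith [hc1, hc2, ha2, hex1]
    have hka : (k:ℝ)*a = -2*c := by
      have h0 : 2*c + (k:ℝ)*a = 0 := by
        have := le_antisymm hzero (sq_nonneg _)
        exact sq_eq_zero_iff.mp this
      linarith
    have hcc : (c+(k:ℝ)*a)^2 = c^2 := by rw [hka]; ring
    have hE'' : β'^2*a^2 + (0:ℝ)^2 = β'^2*c^2 + d^2 := by
      rw [hcc] at hE'; linear_combination hE'
    exact uniq_beta a 0 c d β β' hβ hβ' (by linear_combination hE) hE''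
      (fun ⟨_, u2⟩ => hd0 (sq_eq_zero_iff.mp (by linarith [u2])))


lemma Wbounds (a b c d A : ℝ) (hQ : 0 < a*b) (hW : 0 < a*d+b*c)
    (hA2 : A^2 = (b*c-a*d)^2 - 3*(a*b)^2) (hAnn : 0 ≤ A)
    (hF : (2*(a*b) + 2*(c*d))^2 ≤ (a*d + b*c)^2) :
    A - a*b ≤ a*d+b*c ∧ a*d+b*c ≤ A + a*b := by
  have hF2 : (4*(a*b)^2 + (a*d+b*c)^2 - (b*c-a*d)^2)^2 ≤ 4*(a*b)^2*(a*d+b*c)^2 := by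
    nlinarith [mul_le_mul_of_nonneg_left hF (show (0:ℝ) ≤ 4*(a*b)^2 by positivity)]
  have hxley : 4*(a*b)^2 + (a*d+b*c)^2 - (b*c-a*d)^2 ≤ 2*(a*b)*(a*d+b*c) := by
    nlinarith [hF2, mul_pos hQ hW, sq_nonneg (4*(a*b)^2 + (a*d+b*c)^2 - (b*c-a*d)^2 - 2*(a*b)*(a*d+b*c))]
  have hxgey : -(2*(a*b)*(a*d+b*c)) ≤ 4*(a*b)^2 + (a*d+b*c)^2 - (b*c-a*d)^2 := by
    nlinarith [hF2, mul_pos hQ hW, sq_nonneg (4*(a*b)^2 + (a*d+b*c)^2 - (b*c-a*d)^2 + 2*(a*b)*(a*d+b*c))]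
  constructor
  · by_contra h
    push_neg at h
    have h1 : 0 < A - (a*d+b*c) - a*b := by linarith
    have h2 : 0 < A + (a*d+b*c) + a*b := by linarith
    nlinarith [mul_pos h1 h2, hxgey, hA2]
  · by_contra h
    push_neg at h
    have h1 : 0 < (a*d+b*c) - a*b - A := by linarith
    have h2 : 0 < (a*d+b*c) - a*b + A := by linarith
    nlinarith [mul_pos h1 h2, hxley, hA2]

set_option maxHeartbeats 1000000 in
lemma core_pos1 (a b c d β β' : ℝ) (k : ℤ) (hβ : 0 < β) (hβ' : 0 < β') (hk : k ≠ 0)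
    (hQ : 0 < a*b)
    (hV : 4*(a*b)^2 ≤ (b*c - a*d)^2)
    (hW : 0 < a*d + b*c)
    (hW' : 0 < a*(d+(k:ℝ)*b) + b*(c+(k:ℝ)*a))
    (hF : (2*(a*b) + 2*(c*d))^2 ≤ (a*d + b*c)^2)
    (hF' : (2*(a*b) + 2*((c+(k:ℝ)*a)*(d+(k:ℝ)*b)))^2 ≤ (a*(d+(k:ℝ)*b) + b*(c+(k:ℝ)*a))^2)
    (hE : β^2*a^2 + b^2 = β^2*c^2 + d^2)
    (hE' : β'^2*a^2 + b^2 = β'^2*(c+(k:ℝ)*a)^2 + (d+(k:ℝ)*b)^2)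
    (hnd' : ¬(a^2 = (c+(k:ℝ)*a)^2 ∧ b^2 = (d+(k:ℝ)*b)^2)) : β = β' := by
  have hA0 : (0:ℝ) ≤ (b*c - a*d)^2 - 3*(a*b)^2 := by nlinarith [sq_nonneg (a*b)]
  set A := Real.sqrt ((b*c - a*d)^2 - 3*(a*b)^2) with hAdef
  have hA2 : A^2 = (b*c - a*d)^2 - 3*(a*b)^2 := Real.sq_sqrt hA0
  have hAnn : (0:ℝ) ≤ A := Real.sqrt_nonneg _
  have hQA : a*b ≤ A := by
    by_contra h
    push_neg at h
    have h1 : 0 < (a*b) - A := by linarith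
    have h2 : 0 < (a*b) + A := by linarith
    nlinarith [mul_pos h1 h2, hV, hA2]
  obtain ⟨hWlo, hWup⟩ := Wbounds a b c d A hQ hW hA2 hAnn hF
  have hA2' : A^2 = (b*(c+(k:ℝ)*a)-a*(d+(k:ℝ)*b))^2 - 3*(a*b)^2 := by
    rw [hA2]; ring
  obtain ⟨hWlo', hWup'⟩ := Wbounds a b (c+(k:ℝ)*a) (d+(k:ℝ)*b) A hQ hW' hA2' hAnn hF'
  have hdiff : a*(d+(k:ℝ)*b)+b*(c+(k:ℝ)*a) = (a*d+b*c) + 2*(k:ℝ)*(a*b) := by ring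
  have hk1 : (k:ℝ) ≤ 1 := by
    by_contra h
    push_neg at h
    have := mul_pos (show (0:ℝ) < (k:ℝ) - 1 by linarith) hQ
    linarith [hdiff, hWup', hWlo, this]
  have hk2 : (-1:ℝ) ≤ (k:ℝ) := by
    by_contra h
    push_neg at h
    have := mul_pos (show (0:ℝ) < -1 - (k:ℝ) by linarith) hQ
    linarith [hdiff, hWlo', hWup, this]
  have hkcases : k = 1 ∨ k = -1 := by
    have h1 : k ≤ 1 := by exact_mod_cast hk1
    have h2 : -1 ≤ k := by exact_mod_cast hk2
    omega
  rcases hkcases with hke | hke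
  · -- k = 1 : W = A - Q, ip = -P/2
    have hkr : (k:ℝ) = 1 := by rw [hke]; norm_num
    rw [hkr] at hdiff hE' hnd' hWup' hWlo'
    have hWeq : a*d+b*c = A - a*b := by
      rw [hdiff] at hWup'
      linarith
    have h9 : (2*(a*b)) * ((2*(a*b) + 2*(c*d)) + (a*d+b*c)) = 0 := by
      have e1 : (a*d+b*c) + a*b - A = 0 := by linarith [hWeq]
      linear_combination ((a*d+b*c) + a*b + A) * e1 + hA2
    have hX : 2*(a*b) + 2*(c*d) = -(a*d+b*c) := by
      rcases mul_eq_zero.mp h9 with h | h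
      · exact absurd h (by positivity)
      · linarith
    have h10 : (a*d+b*c) * ((β^2*(a*c)+b*d) + (β^2*a^2+b^2)/2) = 0 := by
      linear_combination ((β^2*a^2+b^2)/2) * hX + (-(a*b)) * hE
    have hip : β^2*(a*c)+b*d = -(β^2*a^2+b^2)/2 := by
      rcases mul_eq_zero.mp h10 with h | h
      · exact absurd h (ne_of_gt hW)
      · linarith
    have hEnew : β^2*a^2 + b^2 = β^2*(c+(1:ℝ)*a)^2 + (d+(1:ℝ)*b)^2 := by
      linear_combination hE - 2*hip
    exact uniq_beta a b (c+(1:ℝ)*a) (d+(1:ℝ)*b) β β' hβ hβ' hEnew hE' hnd'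
  · -- k = -1 : W = A + Q, ip = +P/2
    have hkr : (k:ℝ) = -1 := by rw [hke]; norm_num
    rw [hkr] at hdiff hE' hnd' hWup' hWlo'
    have hWeq : a*d+b*c = A + a*b := by
      rw [hdiff] at hWlo'
      linarith
    have h9 : (2*(a*b)) * ((2*(a*b) + 2*(c*d)) - (a*d+b*c)) = 0 := by
      have e1 : (a*d+b*c) - a*b - A = 0 := by linarith [hWeq]
      linear_combination ((a*d+b*c) - a*b + A) * e1 + hA2
    have hX : 2*(a*b) + 2*(c*d) = (a*d+b*c) := by
      rcases mul_eq_zero.mp h9 with h | h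
      · exact absurd h (by positivity)
      · linarith
    have h10 : (a*d+b*c) * ((β^2*(a*c)+b*d) - (β^2*a^2+b^2)/2) = 0 := by
      linear_combination ((β^2*a^2+b^2)/2) * hX + (-(a*b)) * hE
    have hip : β^2*(a*c)+b*d = (β^2*a^2+b^2)/2 := by
      rcases mul_eq_zero.mp h10 with h | h
      · exact absurd h (ne_of_gt hW)
      · linarith
    have hEnew : β^2*a^2 + b^2 = β^2*(c+(-1:ℝ)*a)^2 + (d+(-1:ℝ)*b)^2 := by
      linear_combination hE + 2*hip
    exact uniq_beta a b (c+(-1:ℝ)*a) (d+(-1:ℝ)*b) β β' hβ hβ' hEnew hE' hnd'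


set_option maxHeartbeats 1000000 in
lemma core_pos (a b c d β β' : ℝ) (k : ℤ) (hβ : 0 < β) (hβ' : 0 < β') (hk : k ≠ 0)
    (hQ : 0 < a*b)
    (hV : 4*(a*b)^2 ≤ (b*c - a*d)^2)
    (hWs : 0 < (a*d + b*c) * (a*(d+(k:ℝ)*b) + b*(c+(k:ℝ)*a)))
    (hF : (2*(a*b) + 2*(c*d))^2 ≤ (a*d + b*c)^2)
    (hF' : (2*(a*b) + 2*((c+(k:ℝ)*a)*(d+(k:ℝ)*b)))^2 ≤ (a*(d+(k:ℝ)*b) + b*(c+(k:ℝ)*a))^2)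
    (hE : β^2*a^2 + b^2 = β^2*c^2 + d^2)
    (hE' : β'^2*a^2 + b^2 = β'^2*(c+(k:ℝ)*a)^2 + (d+(k:ℝ)*b)^2)
    (hnd' : ¬(a^2 = (c+(k:ℝ)*a)^2 ∧ b^2 = (d+(k:ℝ)*b)^2)) : β = β' := by
  rcases lt_or_ge 0 (a*d + b*c) with hW | hW
  · have hW' : 0 < a*(d+(k:ℝ)*b) + b*(c+(k:ℝ)*a) := by
      rcases lt_or_ge 0 (a*(d+(k:ℝ)*b) + b*(c+(k:ℝ)*a)) with h | h
      · exact h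
      · have := mul_nonpos_of_nonneg_of_nonpos (le_of_lt hW) h
        linarith
    exact core_pos1 a b c d β β' k hβ hβ' hk hQ hV hW hW' hF hF' hE hE' hnd'
  · rcases eq_or_lt_of_le hW with h0 | hWneg
    · rw [h0, zero_mul] at hWs
      exact absurd hWs (lt_irrefl 0)
    · have hW'neg : a*(d+(k:ℝ)*b) + b*(c+(k:ℝ)*a) < 0 := by
        rcases lt_or_ge (a*(d+(k:ℝ)*b) + b*(c+(k:ℝ)*a)) 0 with h | h
        · exact h
        · have := mul_nonpos_of_nonpos_of_nonneg (le_of_lt hWneg) h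
          linarith
      have hknz : (-k) ≠ 0 := by omega
      refine core_pos1 a b (-c) (-d) β β' (-k) hβ hβ' hknz hQ (by nlinarith [hV]) ?_ ?_ ?_ ?_ ?_ ?_ ?_
      · push_cast
        nlinarith [hWneg]
      · push_cast
        nlinarith [hW'neg]
      · have e1 : (2*(a*b) + 2*((-c)*(-d)))^2 = (2*(a*b) + 2*(c*d))^2 := by ring
        have e2 : (a*(-d) + b*(-c))^2 = (a*d + b*c)^2 := by ring
        rw [e1, e2]; exact hF
      · push_cast
        have e1 : (2*(a*b) + 2*((-c+(-(k:ℝ))*a)*(-d+(-(k:ℝ))*b)))^2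
            = (2*(a*b) + 2*((c+(k:ℝ)*a)*(d+(k:ℝ)*b)))^2 := by ring
        have e2 : (a*(-d+(-(k:ℝ))*b) + b*(-c+(-(k:ℝ))*a))^2
            = (a*(d+(k:ℝ)*b) + b*(c+(k:ℝ)*a))^2 := by ring
        rw [e1, e2]; exact hF'
      · linear_combination hE
      · push_cast
        linear_combination hE'
      · push_cast
        intro ⟨u1, u2⟩
        exact hnd' ⟨by linear_combination u1, by linear_combination u2⟩

set_option maxHeartbeats 1000000 in
lemma core (a b c d β β' : ℝ) (k : ℤ) (hβ : 0 < β) (hβ' : 0 < β') (hk : k ≠ 0)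
    (hV0 : b*c - a*d ≠ 0)
    (hV : 4*(a*b)^2 ≤ (b*c - a*d)^2)
    (hWs : 0 < (a*d + b*c) * (a*(d+(k:ℝ)*b) + b*(c+(k:ℝ)*a)))
    (hF : (2*(a*b) + 2*(c*d))^2 ≤ (a*d + b*c)^2)
    (hF' : (2*(a*b) + 2*((c+(k:ℝ)*a)*(d+(k:ℝ)*b)))^2 ≤ (a*(d+(k:ℝ)*b) + b*(c+(k:ℝ)*a))^2)
    (hE : β^2*a^2 + b^2 = β^2*c^2 + d^2)
    (hE' : β'^2*a^2 + b^2 = β'^2*(c+(k:ℝ)*a)^2 + (d+(k:ℝ)*b)^2)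
    (hnd' : ¬(a^2 = (c+(k:ℝ)*a)^2 ∧ b^2 = (d+(k:ℝ)*b)^2)) : β = β' := by
  rcases lt_trichotomy (a*b) 0 with hq | hq | hq
  · -- conjugate: replace b ↦ -b, d ↦ -d
    refine core_pos a (-b) c (-d) β β' k hβ hβ' hk (by nlinarith) (by nlinarith [hV]) ?_ ?_ ?_ ?_ ?_ ?_
    · have e1 : (a*(-d) + (-b)*c) * (a*(-(d+(k:ℝ)*b)) + (-b)*(c+(k:ℝ)*a))
          = (a*d + b*c) * (a*(d+(k:ℝ)*b) + b*(c+(k:ℝ)*a)) := by ring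
      have e2 : a*(-d+(k:ℝ)*(-b)) + (-b)*(c+(k:ℝ)*a)
          = a*(-(d+(k:ℝ)*b)) + (-b)*(c+(k:ℝ)*a) := by ring
      rw [e2, e1]; exact hWs
    · have e1 : (2*(a*(-b)) + 2*(c*(-d)))^2 = (2*(a*b) + 2*(c*d))^2 := by ring
      have e2 : (a*(-d) + (-b)*c)^2 = (a*d + b*c)^2 := by ring
      rw [e1, e2]; exact hF
    · have e1 : (2*(a*(-b)) + 2*((c+(k:ℝ)*a)*(-d+(k:ℝ)*(-b))))^2
          = (2*(a*b) + 2*((c+(k:ℝ)*a)*(d+(k:ℝ)*b)))^2 := by ring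
      have e2 : (a*(-d+(k:ℝ)*(-b)) + (-b)*(c+(k:ℝ)*a))^2
          = (a*(d+(k:ℝ)*b) + b*(c+(k:ℝ)*a))^2 := by ring
      rw [e1, e2]; exact hF'
    · linear_combination hE
    · linear_combination hE'
    · intro ⟨u1, u2⟩
      exact hnd' ⟨by linear_combination u1, by linear_combination u2⟩
  · exact core_zero a b c d β β' k hβ hβ' hk hq hV0 hF hF' hE hE'
  · exact core_pos a b c d β β' k hβ hβ' hk hq hV hWs hF hF' hE hE' hnd'

-- ==================== basis change ====================

lemma zbasis_mem_y (S : Set ℂ) (x y : ℂ) (hb : IsZBasisOf S x y) : y ∈ S := by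
  rw [hb]
  exact ⟨0, 1, by push_cast; ring⟩

lemma zbasis_neg (S : Set ℂ) (x y : ℂ) (hb : IsZBasisOf S x y) : IsZBasisOf S x (-y) := by
  rw [IsZBasisOf] at *
  rw [hb]
  ext z
  constructor
  · rintro ⟨m, n, e⟩
    exact ⟨m, -n, by rw [e]; push_cast; ring⟩
  · rintro ⟨m, n, e⟩
    exact ⟨m, -n, by rw [e]; push_cast; ring⟩

lemma basis_change (S : Set ℂ) (x y y' : ℂ) (hb : IsZBasisOf S x y) (hb' : IsZBasisOf S x y')
    (hV' : (x * (starRingEnd ℂ) y').im ≠ 0) :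
    ∃ (e k : ℤ), (e = 1 ∨ e = -1) ∧ y' = e*y + k*x := by
  have hy'S : y' ∈ S := zbasis_mem_y S x y' hb'
  have hyS : y ∈ S := zbasis_mem_y S x y hb
  rw [hb] at hy'S
  rw [hb'] at hyS
  obtain ⟨p, q, e1⟩ := hy'S
  obtain ⟨r, s, e2⟩ := hyS
  by_cases hqs : q*s = 1
  · have hq : q = 1 ∨ q = -1 := Int.isUnit_iff.mp (IsUnit.of_mul_eq_one s hqs)
    exact ⟨q, p, hq, by rw [e1]; push_cast; ring⟩
  · exfalso
    have comb : ((1 - q*s : ℤ):ℂ) * y' = ((p + q*r : ℤ):ℂ) * x := by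
      push_cast
      linear_combination e1 + (q:ℂ) * e2
    have hne : ((1 - q*s : ℤ):ℂ) ≠ 0 := by
      exact_mod_cast (by omega : (1 - q*s : ℤ) ≠ 0)
    have hy'x : y' = (((p + q*r : ℤ):ℂ) / ((1 - q*s : ℤ):ℂ)) * x := by
      rw [div_mul_eq_mul_div, eq_div_iff hne]
      linear_combination comb
    apply hV'
    rw [hy'x]
    set t : ℝ := (((p + q*r : ℤ):ℝ) / ((1 - q*s : ℤ):ℝ)) with ht
    have hrat : (((p + q*r : ℤ):ℂ) / ((1 - q*s : ℤ):ℂ)) = ((t:ℝ):ℂ) := by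
      rw [ht]; push_cast; ring
    rw [hrat]
    rw [map_mul, Complex.conj_ofReal]
    have hcalc : x * (((t:ℝ):ℂ) * (starRingEnd ℂ) x) = (((t * Complex.normSq x : ℝ)):ℂ) := by
      rw [Complex.ofReal_mul]
      rw [← Complex.mul_conj]
      ring
    rw [hcalc, Complex.ofReal_im]

lemma nondeg_real (a b c d : ℝ) (hV0 : b*c - a*d ≠ 0) (hW : a*d + b*c ≠ 0) :
    ¬(a^2 = c^2 ∧ b^2 = d^2) := by
  rintro ⟨h1, h2⟩
  have hc : (c - a)*(c + a) = 0 := by linear_combination -h1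
  have hd : (d - b)*(d + b) = 0 := by linear_combination -h2
  rcases mul_eq_zero.mp hc with h3 | h3 <;> rcases mul_eq_zero.mp hd with h4 | h4
  · exact hV0 (by linear_combination b*h3 - a*h4)
  · exact hW (by linear_combination a*h4 + b*h3)
  · exact hW (by linear_combination a*h4 + b*h3)
  · exact hV0 (by linear_combination b*h3 - a*h4)

-- ==================== witnesses ====================

def Witness (D : ℕ) (I : Ideal (OK D)) (x y : ℂ) (α : ℝ) : Prop :=
  IsZBasisOf (idealSet D I) x y ∧ (x*y).im ≠ 0 ∧ Fgood x y ≤ 0 ∧ 0 < α ∧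
    ‖Tmap α (iotaC x)‖ = ‖Tmap α (iotaC y)‖

lemma Fgood_neg (x y : ℂ) : Fgood x (-y) = Fgood x y := by
  unfold Fgood
  rw [neg_sq, mul_neg, Complex.neg_im]
  ring

lemma Tmap_iotaC_neg (α : ℝ) (y : ℂ) : Tmap α (iotaC (-y)) = -(Tmap α (iotaC y)) := by
  rw [Tmap_iotaC, Tmap_iotaC]
  ext i
  fin_cases i
  · show α * (-y).re = -(α * y.re)
    rw [Complex.neg_re]; ring
  · show -(-y).im / α = -(-y.im / α)
    rw [Complex.neg_im]; ring

lemma witness_neg {D : ℕ} {I : Ideal (OK D)} {x y : ℂ} {α : ℝ}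
    (h : Witness D I x y α) : Witness D I x (-y) α := by
  obtain ⟨hb, hW, hF, hα, hnorm⟩ := h
  refine ⟨zbasis_neg _ _ _ hb, ?_, ?_, hα, ?_⟩
  · rw [mul_neg, Complex.neg_im]
    exact neg_ne_zero.mpr hW
  · rw [Fgood_neg]; exact hF
  · rw [Tmap_iotaC_neg, norm_neg]; exact hnorm

-- ==================== pairwise equality of α ====================

set_option maxHeartbeats 1000000 in
lemma pair_alpha (D : ℕ) (hD0 : 0 < D) (I : Ideal (OK D)) (hI : I ≠ ⊥) (x : ℂ)
    (hvol : ∀ u v : ℂ, IsZBasisOf (idealSet D I) u v →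
      ((x ^ 2).im) ^ 2 ≤ ((u * (starRingEnd ℂ) v).im) ^ 2)
    (y y' : ℂ) (α α' : ℝ) (k : ℤ)
    (hw : Witness D I x y α) (hw' : Witness D I x y' α')
    (hrel : y' = y + (k:ℂ)*x)
    (hsign : 0 < (x*y).im * (x*y').im) : α = α' := by
  obtain ⟨hb, hW, hF, hα, hnorm⟩ := hw
  obtain ⟨hb', hW', hF', hα', hnorm'⟩ := hw'
  have hV0 : x.im*y.re - x.re*y.im ≠ 0 := by
    have h := Vne D hD0 I hI x y hb
    rwa [im_mul_conj] at h
  have hWr : x.re*y.im + x.im*y.re ≠ 0 := by rwa [im_mul] at hW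
  have hE := hE_of_norm α hα x y hnorm
  have hE'0 := hE_of_norm α' hα' x y' hnorm'
  by_cases hk : k = 0
  · have hy : y' = y := by rw [hrel, hk]; push_cast; ring
    rw [hy] at hE'0
    exact sq_cancel α α' hα hα'
      (uniq_beta x.re x.im y.re y.im (α^2) (α'^2) (by positivity) (by positivity) hE hE'0
        (nondeg_real _ _ _ _ hV0 hWr))
  · have hc' : y'.re = y.re + (k:ℝ)*x.re := by
      rw [hrel]
      simp [Complex.add_re, Complex.mul_re, Complex.intCast_re, Complex.intCast_im]
    have hd' : y'.im = y.im + (k:ℝ)*x.im := by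
      rw [hrel]
      simp [Complex.add_im, Complex.mul_im, Complex.intCast_re, Complex.intCast_im]
    have hV0' : x.im*y'.re - x.re*y'.im ≠ 0 := by
      have h := Vne D hD0 I hI x y' hb'
      rwa [im_mul_conj] at h
    have hWr' : x.re*(y.im+(k:ℝ)*x.im) + x.im*(y.re+(k:ℝ)*x.re) ≠ 0 := by
      rw [im_mul, hc', hd'] at hW'
      exact hW'
    have hV : 4*(x.re*x.im)^2 ≤ (x.im*y.re - x.re*y.im)^2 := by
      have h := hvol x y hb
      rw [im_sq, im_mul_conj] at h
      nlinarith [h]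
    have hFr : (2*(x.re*x.im) + 2*(y.re*y.im))^2 ≤ (x.re*y.im + x.im*y.re)^2 := by
      unfold Fgood at hF
      rw [im_sq, im_sq, im_mul] at hF
      linarith [hF]
    have hFr' : (2*(x.re*x.im) + 2*((y.re+(k:ℝ)*x.re)*(y.im+(k:ℝ)*x.im)))^2
        ≤ (x.re*(y.im+(k:ℝ)*x.im) + x.im*(y.re+(k:ℝ)*x.re))^2 := by
      unfold Fgood at hF'
      rw [im_sq, im_sq, im_mul, hc', hd'] at hF'
      linarith [hF']
    have hE' : (α'^2)^2*x.re^2 + x.im^2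
        = (α'^2)^2*(y.re+(k:ℝ)*x.re)^2 + (y.im+(k:ℝ)*x.im)^2 := by
      rw [hc', hd'] at hE'0
      exact hE'0
    have hWs : 0 < (x.re*y.im + x.im*y.re) * (x.re*(y.im+(k:ℝ)*x.im) + x.im*(y.re+(k:ℝ)*x.re)) := by
      rw [im_mul, im_mul, hc', hd'] at hsign
      exact hsign
    have hnd' : ¬(x.re^2 = (y.re+(k:ℝ)*x.re)^2 ∧ x.im^2 = (y.im+(k:ℝ)*x.im)^2) := by
      apply nondeg_real _ _ _ _ ?_ hWr'
      rw [hc', hd'] at hV0'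
      exact hV0'
    exact sq_cancel α α' hα hα'
      (core x.re x.im y.re y.im (α^2) (α'^2) k (by positivity) (by positivity) hk
        hV0 hV hWs hFr hFr' hE hE' hnd')

-- ==================== at most two α ====================

lemma atmost_two (D : ℕ) (hD0 : 0 < D) (I : Ideal (OK D)) (hI : I ≠ ⊥) (x : ℂ)
    (hvol : ∀ u v : ℂ, IsZBasisOf (idealSet D I) u v →
      ((x ^ 2).im) ^ 2 ≤ ((u * (starRingEnd ℂ) v).im) ^ 2)
    (y₁ y₂ y₃ : ℂ) (α₁ α₂ α₃ : ℝ)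
    (h1 : Witness D I x y₁ α₁) (h2 : Witness D I x y₂ α₂) (h3 : Witness D I x y₃ α₃) :
    α₃ = α₁ ∨ α₃ = α₂ ∨ α₁ = α₂ := by
  have norm2 : ∃ (z : ℂ) (k : ℤ), Witness D I x z α₂ ∧ z = y₁ + (k:ℂ)*x := by
    obtain ⟨e, k, he, hrel⟩ := basis_change (idealSet D I) x y₁ y₂ h1.1 h2.1
      (Vne D hD0 I hI x y₂ h2.1)
    rcases he with he | he
    · exact ⟨y₂, k, h2, by rw [hrel, he]; push_cast; ring⟩
    · exact ⟨-y₂, -k, witness_neg h2, by rw [hrel, he]; push_cast; ring⟩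
  have norm3 : ∃ (z : ℂ) (k : ℤ), Witness D I x z α₃ ∧ z = y₁ + (k:ℂ)*x := by
    obtain ⟨e, k, he, hrel⟩ := basis_change (idealSet D I) x y₁ y₃ h1.1 h3.1
      (Vne D hD0 I hI x y₃ h3.1)
    rcases he with he | he
    · exact ⟨y₃, k, h3, by rw [hrel, he]; push_cast; ring⟩
    · exact ⟨-y₃, -k, witness_neg h3, by rw [hrel, he]; push_cast; ring⟩
  obtain ⟨z₂, k₂, hw₂, hr₂⟩ := norm2
  obtain ⟨z₃, k₃, hw₃, hr₃⟩ := norm3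
  have hrel23 : z₃ = z₂ + ((k₃ - k₂ : ℤ):ℂ)*x := by
    rw [hr₃, hr₂]; push_cast; ring
  have hA : 0 < (x*y₁).im * (x*z₂).im → α₁ = α₂ := fun hs =>
    pair_alpha D hD0 I hI x hvol y₁ z₂ α₁ α₂ k₂ h1 hw₂ hr₂ hs
  have hB : 0 < (x*y₁).im * (x*z₃).im → α₁ = α₃ := fun hs =>
    pair_alpha D hD0 I hI x hvol y₁ z₃ α₁ α₃ k₃ h1 hw₃ hr₃ hs
  have hC : 0 < (x*z₂).im * (x*z₃).im → α₂ = α₃ := fun hs =>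
    pair_alpha D hD0 I hI x hvol z₂ z₃ α₂ α₃ (k₃ - k₂) hw₂ hw₃ hrel23 hs
  rcases (h1.2.1).lt_or_gt with s1 | s1 <;>
    rcases (hw₂.2.1).lt_or_gt with s2 | s2 <;>
    rcases (hw₃.2.1).lt_or_gt with s3 | s3
  · exact Or.inr (Or.inr (hA (mul_pos_of_neg_of_neg s1 s2)))
  · exact Or.inr (Or.inr (hA (mul_pos_of_neg_of_neg s1 s2)))
  · exact Or.inl (hB (mul_pos_of_neg_of_neg s1 s3)).symm
  · exact Or.inr (Or.inl (hC (mul_pos s2 s3)).symm)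
  · exact Or.inr (Or.inl (hC (mul_pos_of_neg_of_neg s2 s3)).symm)
  · exact Or.inl (hB (mul_pos s1 s3)).symm
  · exact Or.inr (Or.inr (hA (mul_pos s1 s2)))
  · exact Or.inr (Or.inr (hA (mul_pos s1 s2)))

-- ==================== lattices and similarity ====================

lemma similar_refl (Λ : Set E2) : SimilarLat Λ Λ :=
  ⟨1, one_pos, LinearIsometryEquiv.refl ℝ E2, by simp⟩

lemma indep_pair (u v : E2) (hdet : u 0 * v 1 - u 1 * v 0 ≠ 0) :
    LinearIndependent ℝ ![u, v] := by
  rw [LinearIndependent.pair_iff]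
  intro s t h
  have h0 : s * u 0 + t * v 0 = 0 := by simpa using congrArg (fun w : E2 => w 0) h
  have h1 : s * u 1 + t * v 1 = 0 := by simpa using congrArg (fun w : E2 => w 1) h
  constructor
  · rcases mul_eq_zero.mp (show s * (u 0 * v 1 - u 1 * v 0) = 0 by
      linear_combination (v 1)*h0 - (v 0)*h1) with h' | h'
    · exact h'
    · exact absurd h' hdet
  · rcases mul_eq_zero.mp (show t * (u 0 * v 1 - u 1 * v 0) = 0 by
      linear_combination (u 0)*h1 - (u 1)*h0) with h' | h'
    · exact h'
    · exact absurd h' hdet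

lemma iotaC_comb (m n : ℤ) (u v : ℂ) :
    iotaC ((m:ℂ)*u + (n:ℂ)*v) = m • iotaC u + n • iotaC v := by
  ext i
  fin_cases i
  · show ((m:ℂ)*u + (n:ℂ)*v).re = (m • iotaC u + n • iotaC v) 0
    simp [iotaC, v2, Complex.add_re, Complex.mul_re, Complex.intCast_re, Complex.intCast_im]
  · show -((m:ℂ)*u + (n:ℂ)*v).im = (m • iotaC u + n • iotaC v) 1
    simp [iotaC, v2, Complex.add_im, Complex.mul_im, Complex.intCast_re, Complex.intCast_im]
    ring

lemma Tmap_comb (α : ℝ) (m n : ℤ) (u v : E2) :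
    Tmap α (m • u + n • v) = m • Tmap α u + n • Tmap α v := by
  ext i
  fin_cases i
  · show α * ((m • u + n • v) 0) = (m • Tmap α u + n • Tmap α v) 0
    show α * ((m • u + n • v) 0) = m • (α * u 0) + n • (α * v 0)
    have : (m • u + n • v) 0 = m • u 0 + n • v 0 := rfl
    rw [this, zsmul_eq_mul, zsmul_eq_mul, zsmul_eq_mul, zsmul_eq_mul]
    ring
  · show ((m • u + n • v) 1) / α = m • (u 1 / α) + n • (v 1 / α)
    have : (m • u + n • v) 1 = m • u 1 + n • v 1 := rfl
    rw [this, zsmul_eq_mul, zsmul_eq_mul, zsmul_eq_mul, zsmul_eq_mul]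
    ring

lemma latticeOf_Tmap (α : ℝ) (u v : E2) :
    Tmap α '' latticeOf u v = latticeOf (Tmap α u) (Tmap α v) := by
  ext w
  constructor
  · rintro ⟨w', ⟨m, n, rfl⟩, rfl⟩
    exact ⟨m, n, by rw [Tmap_comb]⟩
  · rintro ⟨m, n, rfl⟩
    exact ⟨m • u + n • v, ⟨m, n, rfl⟩, by rw [Tmap_comb]⟩

lemma LamK_eq (D : ℕ) (I : Ideal (OK D)) (u v : ℂ) (hb : IsZBasisOf (idealSet D I) u v) :
    LamK D I = latticeOf (iotaC u) (iotaC v) := by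
  unfold LamK
  rw [hb]
  ext w
  constructor
  · rintro ⟨z, ⟨m, n, rfl⟩, rfl⟩
    exact ⟨m, n, by rw [iotaC_comb]⟩
  · rintro ⟨m, n, rfl⟩
    exact ⟨(m:ℂ)*u + (n:ℂ)*v, ⟨m, n, rfl⟩, by rw [iotaC_comb]⟩

lemma lattice_of_witness (D : ℕ) (hD0 : 0 < D) (I : Ideal (OK D)) (hI : I ≠ ⊥)
    (x y : ℂ) (α : ℝ) (hw : Witness D I x y α) : IsLattice (Tmap α '' LamK D I) := by
  obtain ⟨hb, hW, hF, hα, hnorm⟩ := hw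
  have hV0 := Vne D hD0 I hI x y hb
  rw [im_mul_conj] at hV0
  have hα0 : α ≠ 0 := ne_of_gt hα
  refine ⟨Tmap α (iotaC x), Tmap α (iotaC y), ?_, ?_⟩
  · apply indep_pair
    show (α * x.re) * (-y.im / α) - (-x.im / α) * (α * y.re) ≠ 0
    have he : (α * x.re) * (-y.im / α) - (-x.im / α) * (α * y.re)
        = x.im*y.re - x.re*y.im := by field_simp; ring
    rw [he]
    exact hV0
  · rw [LamK_eq D I x y hb, latticeOf_Tmap]

lemma std_lattice : IsLattice (latticeOf (v2 1 0) (v2 0 1)) := by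
  refine ⟨v2 1 0, v2 0 1, ?_, rfl⟩
  apply indep_pair
  show (1:ℝ) * 1 - 0 * 0 ≠ 0
  norm_num

-- ==================== main theorem ====================


/-- An element `x ∈ I` with `Im(x²)² ≤ vol²(Λ_K(I))` extends to at most two good bases of `I`,
up to similarity of the resulting well-rounded twists. -/
theorem stmt_15 (D : ℕ) (hD : Squarefree D) (hD0 : 0 < D)
    (I : Ideal (OK D)) (hI : I ≠ ⊥)
    (x : ℂ) (hx : x ∈ idealSet D I)
    (hvol : ∀ u v : ℂ, IsZBasisOf (idealSet D I) u v →
      ((x ^ 2).im) ^ 2 ≤ ((u * (starRingEnd ℂ) v).im) ^ 2) :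
    ∃ L₁ L₂ : Set E2, IsLattice L₁ ∧ IsLattice L₂ ∧
      ∀ y : ℂ, IsZBasisOf (idealSet D I) x y → (x * y).im ≠ 0 → Fgood x y ≤ 0 →
        ∀ α : ℝ, 0 < α → ‖Tmap α (iotaC x)‖ = ‖Tmap α (iotaC y)‖ →
          SimilarLat (Tmap α '' LamK D I) L₁ ∨ SimilarLat (Tmap α '' LamK D I) L₂ := by
  by_cases h1 : ∃ y α, Witness D I x y α
  · obtain ⟨y₁, α₁, hw1⟩ := h1
    by_cases h2 : ∃ y α, Witness D I x y α ∧ α ≠ α₁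
    · obtain ⟨y₂, α₂, hw2, hne⟩ := h2
      refine ⟨Tmap α₁ '' LamK D I, Tmap α₂ '' LamK D I,
        lattice_of_witness D hD0 I hI x y₁ α₁ hw1,
        lattice_of_witness D hD0 I hI x y₂ α₂ hw2, ?_⟩
      intro y hbasis hIm hFg α hα hnorm
      have h3 : Witness D I x y α := ⟨hbasis, hIm, hFg, hα, hnorm⟩
      rcases atmost_two D hD0 I hI x hvol y₁ y₂ y α₁ α₂ α hw1 hw2 h3 with h | h | h
      · left; rw [h]; exact similar_refl _
      · right; rw [h]; exact similar_refl _
      · exact absurd h.symm hne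
    · push_neg at h2
      refine ⟨Tmap α₁ '' LamK D I, Tmap α₁ '' LamK D I,
        lattice_of_witness D hD0 I hI x y₁ α₁ hw1,
        lattice_of_witness D hD0 I hI x y₁ α₁ hw1, ?_⟩
      intro y hbasis hIm hFg α hα hnorm
      have : α = α₁ := h2 y α ⟨hbasis, hIm, hFg, hα, hnorm⟩
      left; rw [this]; exact similar_refl _
  · refine ⟨latticeOf (v2 1 0) (v2 0 1), latticeOf (v2 1 0) (v2 0 1), std_lattice, std_lattice, ?_⟩
    intro y hbasis hIm hFg α hα hnorm
    exact absurd ⟨y, α, hbasis, hIm, hFg, hα, hnorm⟩ h1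
end
end

section
/- Let D be a squarefree positive integer with −D ≢ 1 (mod 4), and let Λ = ℤ·(1, 0) + ℤ·(0, √D) ⊆ ℝ² (the planar lattice Λ_K(𝒪_K) attached to the ring of integers of K = ℚ(√−D)). Then (a) there exists a real number α > 0 such that T_αΛ is well-rounded, and (b) for every α > 0 such that T_αΛ is well-rounded, the lattice T_αΛ is similar to the square (orthogonal) lattice ℤ² = ℤ·(1, 0) + ℤ·(0, 1). In particular, Λ has a unique well-rounded twist up to similarity, and it is an orthogonal lattice. -/
open scoped RealInnerProductSpace

noncomputable section

lemma E2_ext {z w : E2} (h0 : z 0 = w 0) (h1 : z 1 = w 1) : z = w := by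
  ext i; fin_cases i <;> assumption

lemma mem_L {a b : ℝ} {z : E2} :
    z ∈ latticeOf (v2 a 0) (v2 0 b) ↔ ∃ m n : ℤ, z 0 = m * a ∧ z 1 = n * b := by
  constructor
  · rintro ⟨m, n, rfl⟩
    refine ⟨m, n, ?_, ?_⟩ <;> simp [v2]
  · rintro ⟨m, n, h0, h1⟩
    refine ⟨m, n, E2_ext ?_ ?_⟩ <;> simp [v2, h0, h1]

lemma norm_sq_E2 (z : E2) : ‖z‖ ^ 2 = (z 0) ^ 2 + (z 1) ^ 2 := by
  rw [EuclideanSpace.norm_eq, Real.sq_sqrt (by positivity)]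
  simp [Fin.sum_univ_two, Real.norm_eq_abs, sq_abs]

lemma abs_le_of_sq (x r : ℝ) (hr : 0 ≤ r) (h : x^2 ≤ r^2) : |x| ≤ r := by
  nlinarith [abs_nonneg x, sq_abs x]

lemma abs_comp_le0 (z : E2) : |z 0| ≤ ‖z‖ := by
  refine abs_le_of_sq _ _ (norm_nonneg z) ?_
  rw [norm_sq_E2]; nlinarith [sq_nonneg (z 1)]

lemma abs_comp_le1 (z : E2) : |z 1| ≤ ‖z‖ := by
  refine abs_le_of_sq _ _ (norm_nonneg z) ?_
  rw [norm_sq_E2]; nlinarith [sq_nonneg (z 0)]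

lemma lambda1_L {a b : ℝ} (ha : 0 < a) (hb : 0 < b) :
    lambda1 (latticeOf (v2 a 0) (v2 0 b)) = min a b := by
  have hmemA : v2 a 0 ∈ latticeOf (v2 a 0) (v2 0 b) := mem_L.mpr ⟨1, 0, by simp [v2], by simp [v2]⟩
  have hmemb : v2 0 b ∈ latticeOf (v2 a 0) (v2 0 b) := mem_L.mpr ⟨0, 1, by simp [v2], by simp [v2]⟩
  have hna : ‖v2 a 0‖ = a := by
    rw [show ‖v2 a 0‖ = Real.sqrt (‖v2 a 0‖^2) from (Real.sqrt_sq (norm_nonneg _)).symm,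
      norm_sq_E2]
    simp [v2]; rw [Real.sqrt_sq ha.le]
  have hnb : ‖v2 0 b‖ = b := by
    rw [show ‖v2 0 b‖ = Real.sqrt (‖v2 0 b‖^2) from (Real.sqrt_sq (norm_nonneg _)).symm,
      norm_sq_E2]
    simp [v2]; rw [Real.sqrt_sq hb.le]
  have hlb : ∀ r ∈ {r | ∃ z ∈ latticeOf (v2 a 0) (v2 0 b), z ≠ 0 ∧ ‖z‖ = r}, min a b ≤ r := by
    rintro r ⟨z, hz, hz0, rfl⟩
    obtain ⟨m, n, h0, h1⟩ := mem_L.mp hz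
    rcases eq_or_ne m 0 with hm | hm
    · have hn : n ≠ 0 := by
        rintro rfl
        exact hz0 (E2_ext (by simp [h0, hm, v2]) (by simp [h1, v2]))
      have : b ≤ |z 1| := by
        rw [h1, abs_mul, abs_of_pos hb]
        nlinarith [Int.one_le_abs hn, (by exact_mod_cast (abs_nonneg (n:ℝ)) : (0:ℝ) ≤ |(n:ℝ)|),
          (by exact_mod_cast Int.one_le_abs hn : (1:ℝ) ≤ |(n:ℝ)|)]
      exact le_trans (min_le_right a b) (this.trans (abs_comp_le1 z))
    · have : a ≤ |z 0| := by
        rw [h0, abs_mul, abs_of_pos ha]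
        nlinarith [(by exact_mod_cast Int.one_le_abs hm : (1:ℝ) ≤ |(m:ℝ)|)]
      exact le_trans (min_le_left a b) (this.trans (abs_comp_le0 z))
  have hne : v2 a 0 ≠ 0 := by
    intro h
    have := congrArg (fun v : E2 => v 0) h
    simp [v2] at this
    exact ha.ne' this
  have hneb : v2 0 b ≠ 0 := by
    intro h
    have := congrArg (fun v : E2 => v 1) h
    simp [v2] at this
    exact hb.ne' this
  unfold lambda1
  apply le_antisymm
  · rcases le_total a b with h | h
    · rw [min_eq_left h]
      exact csInf_le ⟨min a b, hlb⟩ ⟨v2 a 0, hmemA, hne, hna⟩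
    · rw [min_eq_right h]
      exact csInf_le ⟨min a b, hlb⟩ ⟨v2 0 b, hmemb, hneb, hnb⟩
  · exact le_csInf ⟨a, v2 a 0, hmemA, hne, hna⟩ hlb

lemma norm_v2a (a : ℝ) (ha : 0 ≤ a) : ‖v2 a 0‖ = a := by
  rw [show ‖v2 a 0‖ = Real.sqrt (‖v2 a 0‖^2) from (Real.sqrt_sq (norm_nonneg _)).symm, norm_sq_E2]
  simp [v2]; rw [Real.sqrt_sq ha]

lemma norm_v2b (b : ℝ) (hb : 0 ≤ b) : ‖v2 0 b‖ = b := by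
  rw [show ‖v2 0 b‖ = Real.sqrt (‖v2 0 b‖^2) from (Real.sqrt_sq (norm_nonneg _)).symm, norm_sq_E2]
  simp [v2]; rw [Real.sqrt_sq hb]

/-- If a < b, the min vectors all have second coordinate 0, so not well-rounded. -/
lemma not_WR_lt {a b : ℝ} (ha : 0 < a) (hb : 0 < b) (hab : a < b) :
    ¬ IsWellRounded (latticeOf (v2 a 0) (v2 0 b)) := by
  intro hWR
  have hl1 : lambda1 (latticeOf (v2 a 0) (v2 0 b)) = a := by
    rw [lambda1_L ha hb, min_eq_left hab.le]
  have hsub : minVecs (latticeOf (v2 a 0) (v2 0 b)) ⊆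
      (LinearMap.ker ((EuclideanSpace.proj 1 : E2 →L[ℝ] ℝ) : E2 →ₗ[ℝ] ℝ) : Set E2) := by
    rintro z ⟨hz, hnorm⟩
    obtain ⟨m, n, h0, h1⟩ := mem_L.mp hz
    have hn : n = 0 := by
      by_contra hn
      have h1' : b ≤ |z 1| := by
        rw [h1, abs_mul, abs_of_pos hb]
        nlinarith [(by exact_mod_cast Int.one_le_abs hn : (1:ℝ) ≤ |(n:ℝ)|)]
      have := (h1'.trans (abs_comp_le1 z)).trans_eq (hnorm.trans hl1)
      linarith
    simp only [SetLike.mem_coe, LinearMap.mem_ker]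
    simpa [h1, hn] using rfl
  have hle := (Submodule.span_le.mpr hsub)
  rw [hWR] at hle
  have : v2 0 1 ∈ LinearMap.ker ((EuclideanSpace.proj 1 : E2 →L[ℝ] ℝ) : E2 →ₗ[ℝ] ℝ) :=
    hle Submodule.mem_top
  simp only [LinearMap.mem_ker] at this
  have : (v2 0 1 : E2) 1 = 0 := this
  simp [v2] at this

lemma not_WR_gt {a b : ℝ} (ha : 0 < a) (hb : 0 < b) (hab : b < a) :
    ¬ IsWellRounded (latticeOf (v2 a 0) (v2 0 b)) := by
  intro hWR
  have hl1 : lambda1 (latticeOf (v2 a 0) (v2 0 b)) = b := by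
    rw [lambda1_L ha hb, min_eq_right hab.le]
  have hsub : minVecs (latticeOf (v2 a 0) (v2 0 b)) ⊆
      (LinearMap.ker ((EuclideanSpace.proj 0 : E2 →L[ℝ] ℝ) : E2 →ₗ[ℝ] ℝ) : Set E2) := by
    rintro z ⟨hz, hnorm⟩
    obtain ⟨m, n, h0, h1⟩ := mem_L.mp hz
    have hm : m = 0 := by
      by_contra hm
      have h0' : a ≤ |z 0| := by
        rw [h0, abs_mul, abs_of_pos ha]
        nlinarith [(by exact_mod_cast Int.one_le_abs hm : (1:ℝ) ≤ |(m:ℝ)|)]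
      have := (h0'.trans (abs_comp_le0 z)).trans_eq (hnorm.trans hl1)
      linarith
    simp only [SetLike.mem_coe, LinearMap.mem_ker]
    simpa [h0, hm] using rfl
  have hle := (Submodule.span_le.mpr hsub)
  rw [hWR] at hle
  have : v2 1 0 ∈ LinearMap.ker ((EuclideanSpace.proj 0 : E2 →L[ℝ] ℝ) : E2 →ₗ[ℝ] ℝ) :=
    hle Submodule.mem_top
  simp only [LinearMap.mem_ker] at this
  have : (v2 1 0 : E2) 0 = 0 := this
  simp [v2] at this

lemma WR_of_eq {a : ℝ} (ha : 0 < a) : IsWellRounded (latticeOf (v2 a 0) (v2 0 a)) := by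
  have hl1 : lambda1 (latticeOf (v2 a 0) (v2 0 a)) = a := by
    rw [lambda1_L ha ha, min_self]
  have hma : v2 a 0 ∈ minVecs (latticeOf (v2 a 0) (v2 0 a)) :=
    ⟨mem_L.mpr ⟨1, 0, by simp [v2], by simp [v2]⟩, by rw [norm_v2a a ha.le, hl1]⟩
  have hmb : v2 0 a ∈ minVecs (latticeOf (v2 a 0) (v2 0 a)) :=
    ⟨mem_L.mpr ⟨0, 1, by simp [v2], by simp [v2]⟩, by rw [norm_v2b a ha.le, hl1]⟩
  rw [IsWellRounded, eq_top_iff]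
  rintro z -
  have hz : z = (z 0 / a) • v2 a 0 + (z 1 / a) • v2 0 a := by
    refine E2_ext ?_ ?_ <;> simp [v2] <;> field_simp
  rw [hz]
  exact Submodule.add_mem _
    (Submodule.smul_mem _ _ (Submodule.subset_span hma))
    (Submodule.smul_mem _ _ (Submodule.subset_span hmb))

lemma Tmap_image (α b : ℝ) (hα : α ≠ 0) :
    Tmap α '' latticeOf (v2 1 0) (v2 0 b) = latticeOf (v2 α 0) (v2 0 (b / α)) := by
  ext z
  constructor
  · rintro ⟨w, hw, rfl⟩
    obtain ⟨m, n, h0, h1⟩ := mem_L.mp hw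
    refine mem_L.mpr ⟨m, n, ?_, ?_⟩
    · show α * w 0 = m * α
      rw [h0]; ring
    · show w 1 / α = n * (b / α)
      rw [h1]; ring
  · intro hz
    obtain ⟨m, n, h0, h1⟩ := mem_L.mp hz
    refine ⟨v2 (m : ℝ) (n * b), mem_L.mpr ⟨m, n, by simp [v2], by simp [v2]⟩, ?_⟩
    refine E2_ext ?_ ?_
    · show α * (v2 (m : ℝ) (n * b)) 0 = z 0
      rw [h0]; simp [v2]; ring
    · show (v2 (m : ℝ) (n * b)) 1 / α = z 1
      rw [h1]; simp [v2]; ring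

lemma similar_L {a : ℝ} (ha : 0 < a) :
    LatticeSimilar (latticeOf (v2 a 0) (v2 0 a)) (latticeOf (v2 1 0) (v2 0 1)) := by
  refine ⟨a⁻¹, by positivity, LinearIsometryEquiv.refl ℝ E2, ?_⟩
  ext z
  simp only [LinearIsometryEquiv.coe_refl, id_eq, Set.mem_image]
  constructor
  · intro hz
    obtain ⟨m, n, h0, h1⟩ := mem_L.mp hz
    refine ⟨a • z, mem_L.mpr ⟨m, n, ?_, ?_⟩, ?_⟩
    · show a * z 0 = m * a
      rw [h0]; ring
    · show a * z 1 = n * a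
      rw [h1]; ring
    · refine E2_ext ?_ ?_ <;>
        · show a⁻¹ * (a * _) = _
          field_simp
          rfl
  · rintro ⟨w, hw, rfl⟩
    obtain ⟨m, n, h0, h1⟩ := mem_L.mp hw
    refine mem_L.mpr ⟨m, n, ?_, ?_⟩
    · show a⁻¹ * w 0 = m * 1
      rw [h0]; field_simp
    · show a⁻¹ * w 1 = n * 1
      rw [h1]; field_simp

/-- For squarefree `D > 0` with `-D ≢ 1 (mod 4)`, the lattice `ℤ(1,0) + ℤ(0,√D)` has a
well-rounded twist, and every well-rounded twist of it is similar to the square lattice `ℤ²`. -/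
theorem stmt_16 (D : ℕ) (hD : Squarefree D) (hD0 : 0 < D) (hmod : D % 4 ≠ 3) :
    (∃ α : ℝ, 0 < α ∧
        IsWellRounded (Tmap α '' latticeOf (v2 1 0) (v2 0 (Real.sqrt D)))) ∧
      ∀ α : ℝ, 0 < α →
        IsWellRounded (Tmap α '' latticeOf (v2 1 0) (v2 0 (Real.sqrt D))) →
        LatticeSimilar (Tmap α '' latticeOf (v2 1 0) (v2 0 (Real.sqrt D)))
          (latticeOf (v2 1 0) (v2 0 1)) := by
  set b : ℝ := Real.sqrt D with hbdef
  have hb : 0 < b := Real.sqrt_pos.mpr (by exact_mod_cast hD0)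
  constructor
  · refine ⟨Real.sqrt b, Real.sqrt_pos.mpr hb, ?_⟩
    have hα : (0:ℝ) < Real.sqrt b := Real.sqrt_pos.mpr hb
    rw [Tmap_image _ _ hα.ne']
    have : b / Real.sqrt b = Real.sqrt b := by
      rw [eq_comm, eq_div_iff hα.ne', Real.mul_self_sqrt hb.le]
    rw [this]
    exact WR_of_eq hα
  · intro α hα hWR
    rw [Tmap_image _ _ hα.ne'] at hWR ⊢
    have hc : 0 < b / α := div_pos hb hα
    rcases lt_trichotomy α (b / α) with h | h | h
    · exact absurd hWR (not_WR_lt hα hc h)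
    · rw [← h] at hWR ⊢
      exact similar_L hα
    · exact absurd hWR (not_WR_gt hα hc h)
end
end

section
/- Let D be a squarefree positive integer, K = ℚ(√−D) ⊂ ℂ (with √−D = i√D), and 𝒪_K its ring of integers. Then for every nonzero ideal I of 𝒪_K there exists a real number α > 0 such that the twist T_αΛ_K(I) is a well-rounded lattice; that is, every ideal of 𝒪_K has at least one well-rounded twist. -/
open scoped RealInnerProductSpace

noncomputable section

section Aux

lemma sqrtnD_sq (D : ℕ) : (sqrtnD D) ^ 2 = -(D : ℂ) := by
  have hr : ((Real.sqrt D : ℝ) : ℂ) ^ 2 = (D : ℂ) := by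
    rw [← Complex.ofReal_pow, Real.sq_sqrt (Nat.cast_nonneg D)]
    norm_num
  simp only [sqrtnD, mul_pow, Complex.I_sq, hr]
  ring

lemma deltaK_sq (D : ℕ) : ∃ c d : ℤ, (deltaK D) ^ 2 = (c : ℂ) + (d : ℂ) * deltaK D := by
  unfold deltaK
  split
  · rename_i h4
    have hdvd : (4 : ℤ) ∣ (D : ℤ) + 1 := by omega
    obtain ⟨c, hc⟩ := hdvd
    refine ⟨-c, 1, ?_⟩
    have hc' : ((D : ℂ) + 1) = 4 * (c : ℂ) := by exact_mod_cast congrArg (Int.cast : ℤ → ℂ) hc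
    have hs := sqrtnD_sq D
    push_cast
    linear_combination ((1:ℂ)/4) * hs - ((1:ℂ)/4) * hc'
  · exact ⟨-(D : ℤ), 0, by push_cast; linear_combination sqrtnD_sq D⟩

lemma deltaK_conj (D : ℕ) : ∃ c d : ℤ, (starRingEnd ℂ) (deltaK D) = (c : ℂ) + (d : ℂ) * deltaK D := by
  have hconjs : (starRingEnd ℂ) (sqrtnD D) = -sqrtnD D := by
    simp [sqrtnD, Complex.conj_I]
  unfold deltaK
  split
  · exact ⟨1, -1, by push_cast; rw [map_div₀, map_add, map_one, hconjs, map_ofNat]; ring⟩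
  · exact ⟨0, -1, by push_cast; rw [hconjs]; ring⟩

lemma mem_OK (D : ℕ) (m n : ℤ) : ((m : ℂ) + (n : ℂ) * deltaK D) ∈ OK D := by
  exact add_mem (intCast_mem _ m)
    (mul_mem (intCast_mem _ n) (Subring.subset_closure rfl))

lemma OK_repr (D : ℕ) (z : ℂ) (hz : z ∈ OK D) : ∃ m n : ℤ, z = (m : ℂ) + (n : ℂ) * deltaK D := by
  obtain ⟨c, d, hcd⟩ := deltaK_sq D
  let S : Subring ℂ :=
    { carrier := {z | ∃ m n : ℤ, z = (m : ℂ) + (n : ℂ) * deltaK D}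
      zero_mem' := ⟨0, 0, by push_cast; ring⟩
      one_mem' := ⟨1, 0, by push_cast; ring⟩
      add_mem' := by
        rintro a b ⟨m, n, rfl⟩ ⟨m', n', rfl⟩
        exact ⟨m + m', n + n', by push_cast; ring⟩
      neg_mem' := by
        rintro a ⟨m, n, rfl⟩
        exact ⟨-m, -n, by push_cast; ring⟩
      mul_mem' := by
        rintro a b ⟨m, n, rfl⟩ ⟨m', n', rfl⟩
        refine ⟨m * m' + n * n' * c, m * n' + n * m' + n * n' * d, ?_⟩
        push_cast
        linear_combination ((n : ℂ) * n') * hcd }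
  have hle : OK D ≤ S := Subring.closure_le.mpr (by
    intro x hx
    rw [Set.mem_singleton_iff] at hx
    exact hx ▸ ⟨0, 1, by push_cast; ring⟩)
  exact hle hz


lemma v2_apply0 (a b : ℝ) : (v2 a b) 0 = a := rfl
lemma v2_apply1 (a b : ℝ) : (v2 a b) 1 = b := rfl

lemma norm_v2_s19 (a b : ℝ) : ‖v2 a b‖ = Real.sqrt (a ^ 2 + b ^ 2) := by
  rw [EuclideanSpace.norm_eq]
  congr 1
  rw [Fin.sum_univ_two]
  simp [v2, Real.norm_eq_abs, sq_abs]

lemma key_bound (S P Q : ℝ) (hS : 0 < S) (hP : |P| ≤ S / 2) (hPQ : P ^ 2 + Q ^ 2 = S ^ 2)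
    (j k : ℤ) (h : ¬(j = 0 ∧ k = 0)) :
    S ^ 2 ≤ ((j : ℝ) * S + (k : ℝ) * P) ^ 2 + ((k : ℝ) * Q) ^ 2 := by
  have hP2 : P ^ 2 ≤ S ^ 2 / 4 := by
    have := sq_abs P
    nlinarith [abs_nonneg P]
  rcases eq_or_ne k 0 with hk | hk
  · have hj : j ≠ 0 := fun hj => h ⟨hj, hk⟩
    have h1 : (1 : ℝ) ≤ (j : ℝ) ^ 2 := by
      have h1' : (1 : ℤ) ≤ |j| := Int.one_le_abs hj
      have : (1 : ℝ) ≤ |(j : ℝ)| := by rw [← Int.cast_abs]; exact_mod_cast h1'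
      nlinarith [sq_abs (j : ℝ)]
    subst hk
    push_cast
    nlinarith
  · have hk1 : (1 : ℤ) ≤ |k| := Int.one_le_abs hk
    by_cases hk2 : 2 ≤ |k|
    · have h4 : (4 : ℝ) ≤ (k : ℝ) ^ 2 := by
        have : (2 : ℝ) ≤ |(k : ℝ)| := by
          rw [← Int.cast_abs]; exact_mod_cast hk2
        nlinarith [sq_abs (k : ℝ)]
      have hnn := mul_nonneg (by linarith : (0:ℝ) ≤ (k : ℝ) ^ 2 - 4) (sq_nonneg Q)
      nlinarith [sq_nonneg ((j : ℝ) * S + (k : ℝ) * P), sq_nonneg S]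
    · have hkeq : |k| = 1 := by omega
      have hk2r : (k : ℝ) ^ 2 = 1 := by
        have hk' : k = 1 ∨ k = -1 := (abs_eq (by norm_num)).mp hkeq
        rcases hk' with h | h <;> subst h <;> push_cast <;> norm_num
      rcases eq_or_ne j 0 with hj | hj
      · subst hj; push_cast; nlinarith
      · have h1 : (1 : ℝ) ≤ |(j : ℝ)| := by
          rw [← Int.cast_abs]; exact_mod_cast Int.one_le_abs hj
        have hjS : S ≤ |(j : ℝ) * S| := by
          rw [abs_mul, abs_of_pos hS]; nlinarith
        have h3 : |2 * (k : ℝ) * P| ≤ S := by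
          rw [abs_mul, abs_mul]
          have : |(k : ℝ)| = 1 := by rw [← Int.cast_abs, hkeq]; norm_num
          rw [this]
          simp only [abs_two]
          linarith
        nlinarith [neg_abs_le ((j : ℝ) * S * (2 * (k : ℝ) * P)), abs_mul ((j : ℝ) * S) (2 * (k : ℝ) * P),
          abs_nonneg ((j : ℝ) * S), sq_abs ((j : ℝ) * S), mul_le_mul_of_nonneg_left h3 (abs_nonneg ((j : ℝ) * S))]


lemma ideal_basis (D : ℕ) (hD0 : 0 < D) (I : Ideal (OK D)) (hI : I ≠ ⊥) :
    ∃ s : ℝ, 0 < s ∧ ∃ v : ℂ, v.im ≠ 0 ∧ |v.re| ≤ s / 2 ∧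
      ((s : ℂ) ∈ idealSet D I) ∧ v ∈ idealSet D I ∧
      ∀ w ∈ idealSet D I, ∃ j k : ℤ, w = (j : ℂ) * (s : ℂ) + (k : ℂ) * v := by
  set δ := deltaK D with hδ
  set G := idealSet D I with hG
  have hδim : 0 < δ.im := deltaK_im_pos D hD0
  -- basic closure properties of G
  have hG0 : (0 : ℂ) ∈ G := ⟨0, I.zero_mem, rfl⟩
  have hGsub : ∀ w ∈ G, ∀ w' ∈ G, w - w' ∈ G := by
    rintro w ⟨z, hz, rfl⟩ w' ⟨z', hz', rfl⟩
    exact ⟨z - z', I.sub_mem hz hz', by push_cast; ring⟩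
  have hGadd : ∀ w ∈ G, ∀ w' ∈ G, w + w' ∈ G := by
    rintro w ⟨z, hz, rfl⟩ w' ⟨z', hz', rfl⟩
    exact ⟨z + z', I.add_mem hz hz', by push_cast; ring⟩
  have hGneg : ∀ w ∈ G, -w ∈ G := by
    rintro w ⟨z, hz, rfl⟩
    exact ⟨-z, I.neg_mem hz, by push_cast; ring⟩
  have hGintmul : ∀ (k : ℤ), ∀ w ∈ G, (k : ℂ) * w ∈ G := by
    rintro k w ⟨z, hz, rfl⟩
    exact ⟨(k : OK D) * z, Ideal.mul_mem_left I _ hz, by push_cast; ring⟩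
  have hGOK : ∀ w ∈ G, w ∈ OK D := by
    rintro w ⟨z, hz, rfl⟩
    exact z.2
  have hGrepr : ∀ w ∈ G, ∃ m n : ℤ, w = (m : ℂ) + (n : ℂ) * δ :=
    fun w hw => OK_repr D w (hGOK w hw)
  -- computing imaginary parts
  have him : ∀ (m n : ℤ), ((m : ℂ) + (n : ℂ) * δ).im = (n : ℝ) * δ.im := by
    intro m n
    simp [Complex.add_im, Complex.mul_im]
  have hre : ∀ (m n : ℤ), ((m : ℂ) + (n : ℂ) * δ).re = (m : ℝ) + (n : ℝ) * δ.re := by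
    intro m n
    simp [Complex.add_re, Complex.mul_re]
  -- real elements of G are integers
  have hreal : ∀ w ∈ G, w.im = 0 → ∃ m : ℤ, w = (m : ℂ) := by
    intro w hw hwim
    obtain ⟨m, n, rfl⟩ := hGrepr w hw
    rw [him m n] at hwim
    have hn : (n : ℝ) = 0 := by
      rcases mul_eq_zero.mp hwim with h | h
      · exact h
      · exact absurd h (ne_of_gt hδim)
    have hn' : n = 0 := by exact_mod_cast hn
    exact ⟨m, by rw [hn']; push_cast; ring⟩
  -- a nonzero element
  obtain ⟨z₀, hz₀I, hz₀⟩ := Submodule.exists_mem_ne_zero_of_ne_bot hI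
  have hw₀ : (z₀ : ℂ) ≠ 0 := fun h => hz₀ (by exact_mod_cast Subtype.ext h)
  -- conj z₀ ∈ OK
  obtain ⟨c, d, hcd⟩ := deltaK_conj D
  have hconjOK : (starRingEnd ℂ) (z₀ : ℂ) ∈ OK D := by
    obtain ⟨m, n, hmn⟩ := OK_repr D (z₀ : ℂ) z₀.2
    rw [hmn, map_add, map_mul, hcd]
    rw [map_intCast, map_intCast]
    have heq : (m : ℂ) + (n : ℂ) * ((c : ℂ) + (d : ℂ) * δ)
        = ((m + n * c : ℤ) : ℂ) + ((n * d : ℤ) : ℂ) * δ := by push_cast; ring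
    rw [heq]
    exact mem_OK D _ _
  -- the positive real element a = N(z₀)
  set a : ℝ := Complex.normSq (z₀ : ℂ) with ha
  have hapos : 0 < a := Complex.normSq_pos.mpr hw₀
  have haG : ((a : ℝ) : ℂ) ∈ G := by
    refine ⟨z₀ * ⟨(starRingEnd ℂ) (z₀ : ℂ), hconjOK⟩, Ideal.mul_mem_right _ I hz₀I, ?_⟩
    push_cast
    exact Complex.mul_conj (z₀ : ℂ)
  obtain ⟨A, hA⟩ := hreal _ haG (by simp)
  have hAne : A ≠ 0 := by
    intro h
    rw [h] at hA
    simp at hA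
    exact absurd hA (ne_of_gt hapos)
  -- the subgroup M of integers in G
  set M : AddSubgroup ℤ :=
    { carrier := {m : ℤ | ((m : ℤ) : ℂ) ∈ G}
      zero_mem' := by simpa using hG0
      add_mem' := by
        intro x y hx hy
        have := hGadd _ hx _ hy
        simpa using this
      neg_mem' := by
        intro x hx
        have := hGneg _ hx
        simpa using this } with hM
  have hAM : A ∈ M := by
    show ((A : ℤ) : ℂ) ∈ G
    rw [← hA]; exact haG
  obtain ⟨m₀, hm₀⟩ := Int.subgroup_cyclic M
  have hm₀M : m₀ ∈ M := by rw [hm₀]; exact AddSubgroup.mem_closure_singleton.mpr ⟨1, one_smul _ _⟩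
  have hMiff : ∀ x : ℤ, x ∈ M ↔ ∃ n : ℤ, n * m₀ = x := by
    intro x
    rw [hm₀, AddSubgroup.mem_closure_singleton]
    simp [smul_eq_mul]
  have hm₀ne : m₀ ≠ 0 := by
    intro h
    obtain ⟨n, hn⟩ := (hMiff A).mp hAM
    rw [h, mul_zero] at hn
    exact hAne hn.symm
  set sZ : ℤ := |m₀| with hsZ
  have hsZpos : 0 < sZ := abs_pos.mpr hm₀ne
  set s : ℝ := (sZ : ℝ) with hs
  have hspos : 0 < s := by rw [hs]; exact_mod_cast hsZpos
  have hsG : ((s : ℝ) : ℂ) ∈ G := by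
    have hsM : sZ ∈ M := by
      rcases abs_choice m₀ with h | h
      · rw [hsZ, h]; exact hm₀M
      · rw [hsZ, h]; exact M.neg_mem hm₀M
    have h1 : ((sZ : ℤ) : ℂ) ∈ G := hsM
    have h2 : ((sZ : ℤ) : ℂ) = ((s : ℝ) : ℂ) := by rw [hs]; push_cast; ring
    rwa [h2] at h1
  have hrealG : ∀ w ∈ G, w.im = 0 → ∃ j : ℤ, w = (j : ℂ) * (s : ℂ) := by
    intro w hw hwim
    obtain ⟨m, hm⟩ := hreal w hw hwim
    have hmM : m ∈ M := by
      have : ((m : ℤ) : ℂ) ∈ G := hm ▸ hw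
      exact this
    obtain ⟨n, hn⟩ := (hMiff m).mp hmM
    rcases abs_choice m₀ with h | h
    · refine ⟨n, ?_⟩
      rw [hm, ← hn, hs, hsZ, h]
      push_cast; ring
    · refine ⟨-n, ?_⟩
      rw [hm, ← hn, hs, hsZ, h]
      push_cast; ring
  -- the subgroup N of δ-coefficients
  set N : AddSubgroup ℤ :=
    { carrier := {n : ℤ | ∃ w ∈ G, w.im = (n : ℝ) * δ.im}
      zero_mem' := ⟨0, hG0, by simp⟩
      add_mem' := by
        rintro x y ⟨w, hw, hwim⟩ ⟨w', hw', hwim'⟩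
        exact ⟨w + w', hGadd _ hw _ hw', by rw [Complex.add_im, hwim, hwim']; push_cast; ring⟩
      neg_mem' := by
        rintro x ⟨w, hw, hwim⟩
        exact ⟨-w, hGneg _ hw, by rw [Complex.neg_im, hwim]; push_cast; ring⟩ } with hN
  have hAN : A ∈ N := by
    have hδOK : δ ∈ OK D := Subring.subset_closure rfl
    obtain ⟨za, hzaI, hza⟩ := haG
    have hza' : ((za : OK D) : ℂ) = ((a : ℝ) : ℂ) := hza
    refine ⟨δ * (a : ℂ), ⟨(⟨δ, hδOK⟩ : OK D) * za, Ideal.mul_mem_left I _ hzaI, by push_cast; rw [hza']⟩, ?_⟩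
    rw [Complex.mul_im]
    simp only [Complex.ofReal_re, Complex.ofReal_im]
    have : a = (A : ℝ) := by exact_mod_cast congrArg Complex.re hA
    rw [this]; ring
  obtain ⟨n₀, hn₀⟩ := Int.subgroup_cyclic N
  have hn₀N : n₀ ∈ N := by rw [hn₀]; exact AddSubgroup.mem_closure_singleton.mpr ⟨1, one_smul _ _⟩
  have hNiff : ∀ x : ℤ, x ∈ N ↔ ∃ n : ℤ, n * n₀ = x := by
    intro x
    rw [hn₀, AddSubgroup.mem_closure_singleton]
    simp [smul_eq_mul]
  have hn₀ne : n₀ ≠ 0 := by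
    intro h
    obtain ⟨n, hn⟩ := (hNiff A).mp hAN
    rw [h, mul_zero] at hn
    exact hAne hn.symm
  obtain ⟨v', hv'G, hv'im⟩ := hn₀N
  have hv'imne : v'.im ≠ 0 := by
    rw [hv'im]
    exact mul_ne_zero (by exact_mod_cast hn₀ne) (ne_of_gt hδim)
  -- decomposition with respect to s and v'
  have hdec : ∀ w ∈ G, ∃ j k : ℤ, w = (j : ℂ) * (s : ℂ) + (k : ℂ) * v' := by
    intro w hw
    obtain ⟨m, n, hmn⟩ := hGrepr w hw
    have hnN : n ∈ N := ⟨w, hw, by rw [hmn]; exact him m n⟩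
    obtain ⟨k, hk⟩ := (hNiff n).mp hnN
    have hsubG : w - (k : ℂ) * v' ∈ G := hGsub _ hw _ (hGintmul k _ hv'G)
    have hsubim : (w - (k : ℂ) * v').im = 0 := by
      rw [Complex.sub_im, Complex.mul_im, hmn, him m n, hv'im]
      simp only [Complex.intCast_re, Complex.intCast_im]
      push_cast [← hk]
      ring
    obtain ⟨j, hj⟩ := hrealG _ hsubG hsubim
    exact ⟨j, k, by linear_combination hj⟩
  -- reduce the real part of v'
  set K₀ : ℤ := round (v'.re / s) with hK₀
  set v : ℂ := v' - (K₀ : ℂ) * (s : ℂ) with hv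
  have hvG : v ∈ G := hGsub _ hv'G _ (hGintmul K₀ _ hsG)
  have hvim : v.im = v'.im := by
    rw [hv, Complex.sub_im, Complex.mul_im]
    simp [Complex.intCast_re, Complex.intCast_im]
  have hvre : |v.re| ≤ s / 2 := by
    have : v.re = s * (v'.re / s - (K₀ : ℝ)) := by
      rw [mul_sub, mul_div_cancel₀ _ (ne_of_gt hspos), hv, Complex.sub_re, Complex.mul_re]
      simp only [Complex.intCast_re, Complex.intCast_im, Complex.ofReal_re, Complex.ofReal_im]
      ring
    rw [this, abs_mul, abs_of_pos hspos]
    have := abs_sub_round (v'.re / s)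
    calc s * |v'.re / s - (K₀ : ℝ)| ≤ s * (1 / 2) := by
          apply mul_le_mul_of_nonneg_left _ hspos.le
          rw [hK₀]; exact this
      _ = s / 2 := by ring
  refine ⟨s, hspos, v, by rw [hvim]; exact hv'imne, hvre, hsG, hvG, ?_⟩
  intro w hw
  obtain ⟨j, k, hjk⟩ := hdec w hw
  exact ⟨j + k * K₀, k, by rw [hjk, hv]; push_cast; ring⟩


lemma v2_eq_zero {a b : ℝ} (h : v2 a b = 0) : a = 0 ∧ b = 0 := by
  constructor
  · rw [← v2_apply0 a b, h]; rfl
  · rw [← v2_apply1 a b, h]; rfl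


end Aux

/-- Every nonzero ideal of `𝒪_K` has at least one well-rounded twist. -/
theorem stmt_19 (D : ℕ) (hD : Squarefree D) (hD0 : 0 < D)
    (I : Ideal (OK D)) (hI : I ≠ ⊥) :
    ∃ α : ℝ, 0 < α ∧ IsWellRounded (Tmap α '' LamK D I) := by
  obtain ⟨s, hspos, v, hqne, hpre, hsG, hvG, hbasis⟩ := ideal_basis D hD0 I hI
  set p : ℝ := v.re with hp
  set q : ℝ := v.im with hq
  -- the twist parameter
  have hps : p ^ 2 ≤ s ^ 2 / 4 := by nlinarith [sq_abs p, abs_nonneg p]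
  have hcpos : 0 < s ^ 2 - p ^ 2 := by nlinarith
  set c : ℝ := Real.sqrt (s ^ 2 - p ^ 2) with hc
  have hcpos' : 0 < c := Real.sqrt_pos.mpr hcpos
  have hc2 : c ^ 2 = s ^ 2 - p ^ 2 := Real.sq_sqrt hcpos.le
  set α : ℝ := Real.sqrt (|q| / c) with hα
  have hαpos : 0 < α := Real.sqrt_pos.mpr (div_pos (abs_pos.mpr hqne) hcpos')
  have hα2 : α ^ 2 = |q| / c := Real.sq_sqrt (div_pos (abs_pos.mpr hqne) hcpos').le
  have hαne : α ≠ 0 := ne_of_gt hαpos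
  refine ⟨α, hαpos, ?_⟩
  set S : ℝ := α * s with hS
  set P : ℝ := α * p with hP
  set Q : ℝ := -(q / α) with hQ
  have hSpos : 0 < S := mul_pos hαpos hspos
  have hkey : q ^ 2 = α ^ 4 * (s ^ 2 - p ^ 2) := by
    have h1 : α ^ 4 = (α ^ 2) ^ 2 := by ring
    rw [h1, hα2, div_pow, sq_abs, ← hc2]
    field_simp
  have hPQS : P ^ 2 + Q ^ 2 = S ^ 2 := by
    rw [hS, hP, hQ]
    field_simp
    linear_combination hkey
  have hPabs : |P| ≤ S / 2 := by
    rw [hP, hS, abs_mul, abs_of_pos hαpos]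
    calc α * |p| ≤ α * (s / 2) := by
          apply mul_le_mul_of_nonneg_left hpre hαpos.le
      _ = α * s / 2 := by ring
  have hQne : Q ≠ 0 := by
    rw [hQ]
    simp only [neg_ne_zero]
    exact div_ne_zero hqne hαne
  set Λ' : Set E2 := Tmap α '' LamK D I with hΛ'
  -- every element of Λ' has the standard form
  have hform : ∀ z ∈ Λ', ∃ j k : ℤ, z = v2 ((j : ℝ) * S + (k : ℝ) * P) ((k : ℝ) * Q) := by
    rintro z ⟨e, ⟨w, hwG, rfl⟩, rfl⟩
    obtain ⟨j, k, hjk⟩ := hbasis w hwG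
    have hwre : w.re = (j : ℝ) * s + (k : ℝ) * p := by
      rw [hjk]
      simp [Complex.add_re, Complex.mul_re]
      exact Or.inl rfl
    have hwim : w.im = (k : ℝ) * q := by
      rw [hjk]
      simp [Complex.add_im, Complex.mul_im]
      exact Or.inl rfl
    refine ⟨j, k, ?_⟩
    show v2 (α * (iotaC w) 0) ((iotaC w) 1 / α) = _
    rw [show (iotaC w) 0 = w.re from v2_apply0 _ _, show (iotaC w) 1 = -w.im from v2_apply1 _ _]
    rw [hwre, hwim, hS, hP, hQ]
    congr 1 <;> ring
  -- the two short vectors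
  set x : E2 := v2 S 0 with hx
  set y : E2 := v2 P Q with hy
  have hxΛ : x ∈ Λ' := by
    refine ⟨iotaC ((s : ℝ) : ℂ), ⟨((s : ℝ) : ℂ), hsG, rfl⟩, ?_⟩
    show v2 (α * (iotaC _) 0) ((iotaC _) 1 / α) = _
    rw [show (iotaC ((s : ℝ) : ℂ)) 0 = ((s : ℝ) : ℂ).re from v2_apply0 _ _,
      show (iotaC ((s : ℝ) : ℂ)) 1 = -((s : ℝ) : ℂ).im from v2_apply1 _ _]
    simp [Complex.ofReal_re, Complex.ofReal_im, hx, hS]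
  have hyΛ : y ∈ Λ' := by
    refine ⟨iotaC v, ⟨v, hvG, rfl⟩, ?_⟩
    show v2 (α * (iotaC v) 0) ((iotaC v) 1 / α) = _
    rw [show (iotaC v) 0 = v.re from v2_apply0 _ _,
      show (iotaC v) 1 = -v.im from v2_apply1 _ _]
    rw [hy, hP, hQ]
    congr 1 <;> ring
  have hxnorm : ‖x‖ = S := by
    rw [hx, norm_v2_s19]
    rw [show S ^ 2 + 0 ^ 2 = S ^ 2 by ring, Real.sqrt_sq hSpos.le]
  have hynorm : ‖y‖ = S := by
    rw [hy, norm_v2_s19, hPQS, Real.sqrt_sq hSpos.le]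
  have hxne : x ≠ 0 := by
    intro h
    exact absurd (v2_eq_zero h).1 (ne_of_gt hSpos)
  have hyne : y ≠ 0 := by
    intro h
    exact absurd (v2_eq_zero h).2 hQne
  -- lower bound on norms
  have hlb : ∀ z ∈ Λ', z ≠ 0 → S ≤ ‖z‖ := by
    intro z hz hzne
    obtain ⟨j, k, rfl⟩ := hform z hz
    have hjk : ¬(j = 0 ∧ k = 0) := by
      rintro ⟨rfl, rfl⟩
      apply hzne
      show v2 ((0:ℤ) * S + (0:ℤ) * P) ((0:ℤ) * Q) = 0
      norm_num
      ext i
      fin_cases i <;> rfl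
    have := key_bound S P Q hSpos hPabs hPQS j k hjk
    rw [norm_v2_s19]
    calc S = Real.sqrt (S ^ 2) := (Real.sqrt_sq hSpos.le).symm
      _ ≤ _ := Real.sqrt_le_sqrt this
  -- lambda1 = S
  have hlam : lambda1 Λ' = S := by
    have hmemT : S ∈ {r | ∃ z ∈ Λ', z ≠ 0 ∧ ‖z‖ = r} := ⟨x, hxΛ, hxne, hxnorm⟩
    have hlbT : ∀ r ∈ {r | ∃ z ∈ Λ', z ≠ 0 ∧ ‖z‖ = r}, S ≤ r := by
      rintro r ⟨z, hz, hzne, rfl⟩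
      exact hlb z hz hzne
    exact le_antisymm (csInf_le ⟨S, hlbT⟩ hmemT) (le_csInf ⟨S, hmemT⟩ hlbT)
  have hxmin : x ∈ minVecs Λ' := ⟨hxΛ, by rw [hxnorm, hlam]⟩
  have hymin : y ∈ minVecs Λ' := ⟨hyΛ, by rw [hynorm, hlam]⟩
  -- well-roundedness
  show Submodule.span ℝ (minVecs Λ') = ⊤
  rw [eq_top_iff]
  rintro z -
  have hsub : ({x, y} : Set E2) ⊆ minVecs Λ' := by
    rintro w (rfl | rfl)
    · exact hxmin
    · exact hymin
  apply Submodule.span_mono hsub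
  rw [Submodule.mem_span_pair]
  refine ⟨(z 0 - (z 1 / Q) * P) / S, z 1 / Q, ?_⟩
  have hSne : S ≠ 0 := ne_of_gt hSpos
  ext i
  fin_cases i
  · show ((z 0 - z 1 / Q * P) / S) * S + (z 1 / Q) * P = z 0
    field_simp
    ring
  · show ((z 0 - z 1 / Q * P) / S) * 0 + (z 1 / Q) * Q = z 1
    field_simp
    ring
end
end
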